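/- arXiv:2307.02560 — 4 statements merged into one kernel-verified Lean document; each statement's English description precedes it below -/
import Mathlib

section
/- For a tuple of r points Z in projective n-space in general position, the Hilbert function of S/I(Z) at degree t equals the minimum of binom(n+t, n) and r. In particular, for all t, h_{S/I(Z)}(t) ≤ min(binom(n+t,n), r). -/
set_option synthInstance.maxHeartbeats 1000000
set_option maxHeartbeats 1600000

open MvPolynomial

/-- The Hilbert function `t ↦ dim_k (S/I)_t` of the quotient of `S = k[x₀,…,xₙ]` by a
homogeneous ideal `I`, computed as `dim_k S_t - dim_k I_t`. -/
noncomputable def hilbFn (k : Type) [Field k] {n : ℕ} (I : Ideal (MvPolynomial (Fin (n + 1)) k))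
    (t : ℕ) : ℕ :=
  Module.finrank k (homogeneousSubmodule (Fin (n + 1)) k t) -
    Module.finrank k (Submodule.restrictScalars k I ⊓ homogeneousSubmodule (Fin (n + 1)) k t :
      Submodule k (MvPolynomial (Fin (n + 1)) k))

/-- The homogeneous vanishing ideal of a tuple of points of `ℙⁿ`, the points being represented
by nonzero vectors in `k^{n+1}`. -/
noncomputable def vanishingIdealPts (k : Type) [Field k] {n r : ℕ}
    (Z : Fin r → (Fin (n + 1) → k)) : Ideal (MvPolynomial (Fin (n + 1)) k) :=
  Ideal.span {f | (∃ m, f.IsHomogeneous m) ∧ ∀ i, eval (Z i) f = 0}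

namespace GenericHilbertAux

theorem deg_eq_sum {q : ℕ} (d : Fin q →₀ ℕ) : d.degree = d.sum fun _ => id := rfl

/-- Equivalence between degree-`t` exponent vectors and `Sym`. -/
noncomputable def degEquivSym (q t : ℕ) : {d : Fin q →₀ ℕ // d.degree = t} ≃ Sym (Fin q) t where
  toFun d := ⟨Finsupp.toMultiset d.1, by rw [Finsupp.card_toMultiset, ← deg_eq_sum]; exact d.2⟩
  invFun m := ⟨Multiset.toFinsupp m.1, by
    have := Finsupp.card_toMultiset (Multiset.toFinsupp m.1)
    rw [Multiset.toFinsupp_toMultiset] at this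
    rw [deg_eq_sum, ← this]; exact m.2⟩
  left_inv d := by ext : 1; simp
  right_inv m := by ext : 1; simp

variable {k : Type} [Field k] {n r : ℕ}

theorem finrank_homog (n t : ℕ) :
    Module.finrank k (homogeneousSubmodule (Fin (n+1)) k t) = (n + t).choose n := by
  rw [homogeneousSubmodule_eq_finsupp_supported]
  haveI : Fintype {d : Fin (n+1) →₀ ℕ // d.degree = t} :=
    Fintype.ofEquiv _ (degEquivSym (n+1) t).symm
  haveI : Fintype ↑{d : Fin (n+1) →₀ ℕ | d.degree = t} :=
    Fintype.ofEquiv _ (degEquivSym (n+1) t).symm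
  have b := MvPolynomial.basisRestrictSupport k { d : Fin (n+1) →₀ ℕ | d.degree = t }
  rw [show (AddMonoidAlgebra.supported k k { d : Fin (n+1) →₀ ℕ | d.degree = t }) =
      restrictSupport k { d : Fin (n+1) →₀ ℕ | d.degree = t } from rfl,
    Module.finrank_eq_card_basis b]
  have e : ↑{ d : Fin (n+1) →₀ ℕ | d.degree = t } ≃ Sym (Fin (n+1)) t := degEquivSym (n+1) t
  rw [Fintype.card_congr e, Sym.card_sym_eq_choose, Fintype.card_fin]
  rw [show n + 1 + t - 1 = n + t by omega, Nat.choose_symm_add]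

instance homogFD (t : ℕ) : FiniteDimensional k (homogeneousSubmodule (Fin (n+1)) k t) := by
  rw [homogeneousSubmodule_eq_finsupp_supported]
  haveI : Finite {d : Fin (n+1) →₀ ℕ // d.degree = t} :=
    Finite.of_equiv _ (degEquivSym (n+1) t).symm
  haveI : Finite ↑{d : Fin (n+1) →₀ ℕ | d.degree = t} :=
    Finite.of_equiv _ (degEquivSym (n+1) t).symm
  exact Module.Finite.of_basis (MvPolynomial.basisRestrictSupport k _)

/-- evaluation at the tuple of points, as a linear map. -/
noncomputable def evalLM {r : ℕ} (Z : Fin r → (Fin (n+1) → k)) :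
    MvPolynomial (Fin (n+1)) k →ₗ[k] (Fin r → k) where
  toFun f := fun i => eval (Z i) f
  map_add' f g := by funext i; simp
  map_smul' c f := by funext i; simp [smul_eval]

noncomputable def Et {r : ℕ} (Z : Fin r → (Fin (n+1) → k)) (t : ℕ) :
    (homogeneousSubmodule (Fin (n+1)) k t : Submodule k (MvPolynomial (Fin (n+1)) k))
      →ₗ[k] (Fin r → k) :=
  (evalLM Z).comp (homogeneousSubmodule (Fin (n+1)) k t).subtype

@[simp] theorem Et_apply {r : ℕ} (Z : Fin r → (Fin (n+1) → k)) (t : ℕ)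
    (x : homogeneousSubmodule (Fin (n+1)) k t) (i : Fin r) :
    Et Z t x i = eval (Z i) x.1 := rfl

noncomputable def rk {r : ℕ} (Z : Fin r → (Fin (n+1) → k)) (t : ℕ) : ℕ :=
  Module.finrank k (LinearMap.range (Et Z t))

theorem vanishing_inf_eq (Z : Fin r → (Fin (n+1) → k)) (t : ℕ) :
    (Submodule.restrictScalars k (vanishingIdealPts k Z) ⊓ homogeneousSubmodule (Fin (n+1)) k t :
      Submodule k (MvPolynomial (Fin (n+1)) k))
    = LinearMap.ker (evalLM Z) ⊓ homogeneousSubmodule (Fin (n+1)) k t := by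
  apply le_antisymm
  · refine inf_le_inf_right _ ?_
    intro f hf
    simp only [Submodule.restrictScalars_mem] at hf
    have hle : vanishingIdealPts k Z ≤
        ⨅ i, RingHom.ker (eval (Z i) : MvPolynomial (Fin (n+1)) k →+* k) := by
      rw [vanishingIdealPts, Ideal.span_le]
      intro g hg
      simp only [SetLike.mem_coe, Ideal.mem_iInf, RingHom.mem_ker]
      exact hg.2
    have := hle hf
    simp only [Ideal.mem_iInf, RingHom.mem_ker] at this
    simp only [LinearMap.mem_ker]
    funext i
    exact this i
  · intro f hf
    refine ⟨?_, hf.2⟩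
    simp only [Submodule.restrictScalars_mem, vanishingIdealPts]
    apply Ideal.subset_span
    refine ⟨⟨t, hf.2⟩, fun i => congrFun (LinearMap.mem_ker.mp hf.1) i⟩

theorem hilbFn_eq_rk (Z : Fin r → (Fin (n+1) → k)) (t : ℕ) :
    hilbFn k (vanishingIdealPts k Z) t = rk Z t := by
  rw [hilbFn, vanishing_inf_eq]
  have hker : LinearMap.ker (Et Z t) =
      Submodule.comap (homogeneousSubmodule (Fin (n+1)) k t).subtype
        (LinearMap.ker (evalLM Z) ⊓ homogeneousSubmodule (Fin (n+1)) k t) := by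
    rw [Et, LinearMap.ker_comp]
    ext x
    simp
  have h2 : Module.finrank k (LinearMap.ker (evalLM Z) ⊓ homogeneousSubmodule (Fin (n+1)) k t :
      Submodule k (MvPolynomial (Fin (n+1)) k)) = Module.finrank k (LinearMap.ker (Et Z t)) := by
    rw [hker]
    exact (Submodule.comapSubtypeEquivOfLe inf_le_right).finrank_eq.symm
  rw [h2, rk]
  have := LinearMap.finrank_range_add_finrank_ker (Et Z t)
  omega

theorem rk_le (Z : Fin r → (Fin (n+1) → k)) (t : ℕ) :
    rk Z t ≤ min ((n+t).choose n) r := by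
  refine le_min ?_ ?_
  · rw [← finrank_homog (k := k) n t, rk]
    exact LinearMap.finrank_range_le _
  · rw [rk]
    have := Submodule.finrank_le (LinearMap.range (Et Z t))
    simpa using this

theorem rk_mono (Z : Fin r → (Fin (n+1) → k)) (t : ℕ)
    (ℓ : MvPolynomial (Fin (n+1)) k) (hℓ : ℓ.IsHomogeneous 1)
    (hnz : ∀ i, eval (Z i) ℓ ≠ 0) :
    rk Z t ≤ rk Z (t+1) := by
  let μ : (homogeneousSubmodule (Fin (n+1)) k t : Submodule k (MvPolynomial (Fin (n+1)) k)) →ₗ[k]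
      (homogeneousSubmodule (Fin (n+1)) k (t+1) : Submodule k (MvPolynomial (Fin (n+1)) k)) :=
    { toFun := fun f => ⟨ℓ * f.1, by
        have h2 : (ℓ * f.1).IsHomogeneous (1 + t) := hℓ.mul f.2
        exact (show 1 + t = t + 1 by ring) ▸ h2⟩
      map_add' := fun f g => by ext : 1; simp [mul_add]
      map_smul' := fun c f => by ext : 1; simp [Algebra.mul_smul_comm] }
  let D : (Fin r → k) ≃ₗ[k] (Fin r → k) :=
    LinearEquiv.piCongrRight fun i => LinearEquiv.smulOfNeZero k k _ (hnz i)
  have key : (Et Z (t+1)).comp μ = (D : (Fin r → k) →ₗ[k] (Fin r → k)).comp (Et Z t) := by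
    refine LinearMap.ext fun f => funext fun i => ?_
    simp [Et, evalLM, μ, D, LinearEquiv.piCongrRight, LinearEquiv.smulOfNeZero,
      smul_eq_mul, LinearEquiv.smulOfUnit, DistribMulAction.toLinearEquiv, Units.smul_def]
  have h1 : rk Z t = Module.finrank k (LinearMap.range ((Et Z (t+1)).comp μ)) := by
    rw [key, LinearMap.range_comp]
    exact (LinearEquiv.finrank_map_eq D _).symm
  rw [h1, rk]
  exact Submodule.finrank_mono (LinearMap.range_comp_le_range _ _)

variable [Infinite k]

theorem exists_nonzero_pt {f : MvPolynomial (Fin (n+1)) k} {t : ℕ}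
    (hf : f.IsHomogeneous t) (h0 : f ≠ 0) :
    ∃ z : Fin (n+1) → k, z ≠ 0 ∧ eval z f ≠ 0 := by
  obtain ⟨z, hz⟩ : ∃ z, eval z f ≠ 0 := by
    by_contra h
    push_neg at h
    exact h0 (MvPolynomial.funext fun x => by simp [h x])
  rcases Nat.eq_zero_or_pos t with ht | ht
  · subst ht
    have hC : f = C (coeff 0 f) := by
      ext d
      by_cases hd : d = 0
      · subst hd; simp
      · rw [coeff_C, if_neg (Ne.symm hd)]
        by_contra hcd
        exact hd ((Finsupp.degree_eq_zero_iff d).mp (by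
          by_contra hdeg
          exact hcd (hf.coeff_eq_zero hdeg)))
    refine ⟨fun _ => 1, fun h => one_ne_zero (congrFun h 0), ?_⟩
    rw [hC] at hz ⊢
    simpa using (by simpa using hz : coeff 0 f ≠ 0)
  · refine ⟨z, ?_, hz⟩
    intro hzz
    subst hzz
    rw [show (eval (0 : Fin (n+1) → k)) f = constantCoeff f from
      congrFun (congrArg _ eval_zero) f] at hz
    apply hz
    rw [show constantCoeff f = coeff 0 f from rfl]
    apply hf.coeff_eq_zero
    simpa using ht.ne

theorem exists_surj (t : ℕ) (m : ℕ)
    (hm : m ≤ Module.finrank k (homogeneousSubmodule (Fin (n+1)) k t)) :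
    ∃ w : Fin m → (Fin (n+1) → k), (∀ a, w a ≠ 0) ∧ Function.Surjective (Et w t) := by
  induction m with
  | zero => exact ⟨Fin.elim0, fun a => a.elim0, fun v => ⟨0, Subsingleton.elim _ _⟩⟩
  | succ m ih =>
    obtain ⟨w, hw, hsurj⟩ := ih (le_trans (Nat.le_succ m) hm)
    have hrange : Module.finrank k (LinearMap.range (Et w t)) = m := by
      rw [LinearMap.range_eq_top.mpr hsurj]
      rw [finrank_top]
      simp
    have hk := LinearMap.finrank_range_add_finrank_ker (Et w t)
    have hker : 0 < Module.finrank k (LinearMap.ker (Et w t)) := by omega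
    have hne : LinearMap.ker (Et w t) ≠ ⊥ := by
      intro hbot
      rw [hbot] at hker
      simp at hker
    obtain ⟨f, hfker, hfne⟩ := (Submodule.ne_bot_iff _).mp hne
    have hfh : (f : MvPolynomial (Fin (n+1)) k).IsHomogeneous t := f.2
    have hf0 : (f : MvPolynomial (Fin (n+1)) k) ≠ 0 := fun h => hfne (Subtype.ext h)
    obtain ⟨z, hz0, hzf⟩ := exists_nonzero_pt hfh hf0
    refine ⟨Fin.snoc w z, ?_, ?_⟩
    · intro a
      refine Fin.lastCases ?_ ?_ a
      · simpa using hz0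
      · intro a; simpa using hw a
    · intro v
      obtain ⟨g, hg⟩ := hsurj (fun a => v (Fin.castSucc a))
      refine ⟨g + ((v (Fin.last m) - eval z (g : MvPolynomial (Fin (n+1)) k)) *
        (eval z (f : MvPolynomial (Fin (n+1)) k))⁻¹) • f, ?_⟩
      funext i
      refine Fin.lastCases ?_ ?_ i
      · simp only [Et_apply, Submodule.coe_add, Submodule.coe_smul, Fin.snoc_last, map_add,
          smul_eval]
        field_simp
        ring
      · intro a
        have h1 : eval (w a) (f : MvPolynomial (Fin (n+1)) k) = 0 := by
          have := congrFun (LinearMap.mem_ker.mp hfker) a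
          simpa using this
        have h2 : eval (w a) (g : MvPolynomial (Fin (n+1)) k) = v (Fin.castSucc a) :=
          congrFun hg a
        simp [Fin.snoc_castSucc, smul_eval, h1, h2]

theorem exists_generic_config (t : ℕ) :
    ∃ Z : Fin r → (Fin (n+1) → k), (∀ i, Z i ≠ 0) ∧ rk Z t = min ((n+t).choose n) r := by
  classical
  set N := (n+t).choose n with hNdef
  set m := min N r with hmdef
  obtain ⟨w, hw, hsurj⟩ := exists_surj t m (by
    rw [finrank_homog (k := k) n t]; exact min_le_left _ _)
  rcases Nat.eq_zero_or_pos r with hr | hr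
  · subst hr
    refine ⟨Fin.elim0, fun i => i.elim0, ?_⟩
    have h0 : rk (Fin.elim0 : Fin 0 → (Fin (n+1) → k)) t = 0 := by
      rw [rk]
      haveI : Subsingleton (Fin 0 → k) := by infer_instance
      exact Module.finrank_zero_of_subsingleton
    rw [h0, hmdef]
    simp
  · have hm1 : 0 < m := by
      have : 0 < N := Nat.choose_pos (by omega)
      omega
    have hmr : m ≤ r := min_le_right _ _
    set Z : Fin r → (Fin (n+1) → k) := fun i => if h : (i : ℕ) < m then w ⟨i, h⟩ else w ⟨0, hm1⟩
      with hZdef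
    refine ⟨Z, fun i => by by_cases h : (i:ℕ) < m <;> simp [hZdef, h, hw], ?_⟩
    refine le_antisymm (rk_le Z t) ?_
    set π : (Fin r → k) →ₗ[k] (Fin m → k) := LinearMap.funLeft k k (Fin.castLE hmr)
    have hcomp : π.comp (Et Z t) = Et w t := by
      refine LinearMap.ext fun x => funext fun a => ?_
      have ha : ((Fin.castLE hmr a : Fin r) : ℕ) < m := a.2
      simp [π, LinearMap.funLeft, hZdef, ha]
    have h1 : Module.finrank k (LinearMap.range (Et w t)) = m := by
      rw [LinearMap.range_eq_top.mpr hsurj]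
      rw [finrank_top]
      simp
    calc m = Module.finrank k (LinearMap.range (π.comp (Et Z t))) := by rw [hcomp, h1]
    _ ≤ rk Z t := by
        rw [LinearMap.range_comp, rk]
        exact Submodule.finrank_map_le π _

open Matrix in
theorem exists_certificate (t : ℕ) :
    ∃ g : MvPolynomial (Fin r × Fin (n + 1)) k, g ≠ 0 ∧
      ∀ Z : Fin r → (Fin (n + 1) → k),
        eval (fun p => Z p.1 p.2) g ≠ 0 → rk Z t = min ((n+t).choose n) r := by
  classical
  set m := min ((n+t).choose n) r with hmdef
  obtain ⟨Zs, hZs0, hZs⟩ := exists_generic_config (k := k) (n := n) (r := r) t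
  have hrange : Module.finrank k (LinearMap.range (Et Zs t)) = m := hZs
  let B : Module.Basis (Fin m) k (LinearMap.range (Et Zs t)) :=
    Module.finBasisOfFinrankEq k _ hrange
  have hpre : ∀ a : Fin m, ∃ f : homogeneousSubmodule (Fin (n+1)) k t,
      Et Zs t f = (B a : Fin r → k) := fun a => (B a).2
  choose f hf using hpre
  have hphi : ∀ b : Fin m, ∃ φ : (Fin r → k) →ₗ[k] k,
      φ.comp (LinearMap.range (Et Zs t)).subtype = B.coord b := fun b =>
    LinearMap.exists_extend (B.coord b)
  choose φ hφ using hphi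
  have hφB : ∀ a b : Fin m, φ b (B a : Fin r → k) = if a = b then 1 else 0 := by
    intro a b
    have := congrFun (congrArg (fun (g : _ →ₗ[k] k) => (g : _ → k)) (hφ b)) (B a)
    simp only [LinearMap.coe_comp, Function.comp_apply, Submodule.coe_subtype] at this
    rw [this, Module.Basis.coord_apply, Module.Basis.repr_self]
    simp [Finsupp.single_apply, eq_comm]
  let Q : Matrix (Fin m) (Fin m) (MvPolynomial (Fin r × Fin (n + 1)) k) :=
    Matrix.of fun a b => ∑ j : Fin r, C (φ b (Pi.single j 1)) *
      rename (fun u => (j, u)) ((f a : MvPolynomial (Fin (n+1)) k))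
  have hQeval : ∀ (Z : Fin r → (Fin (n + 1) → k)) (a b : Fin m),
      eval (fun p => Z p.1 p.2) (Q a b) = φ b (Et Z t (f a)) := by
    intro Z a b
    have h1 : (φ b) (Et Z t (f a)) =
        ∑ j, (Et Z t (f a)) j • φ b (fun i => if j = i then 1 else 0) :=
      LinearMap.pi_apply_eq_sum_univ (φ b) _
    rw [h1]
    simp only [Q, Matrix.of_apply, map_sum, _root_.map_mul, eval_C, eval_rename]
    refine Finset.sum_congr rfl fun j _ => ?_
    have h2 : ((fun p : Fin r × Fin (n+1) => Z p.1 p.2) ∘ fun u => (j, u)) = Z j := rfl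
    rw [h2]
    have h3 : (Pi.single j 1 : Fin r → k) = fun i => if j = i then 1 else 0 := by
      funext i
      simp [Pi.single_apply, eq_comm]
    rw [← h3, Et_apply, smul_eq_mul, mul_comm]
  refine ⟨Q.det, ?_, ?_⟩
  · have hA : (Q.map (eval fun p : Fin r × Fin (n+1) => Zs p.1 p.2)) =
        (1 : Matrix (Fin m) (Fin m) k) := by
      ext a b
      rw [Matrix.map_apply]
      rw [hQeval Zs a b, hf a, hφB a b]
      simp [Matrix.one_apply, eq_comm]
    have hval : eval (fun p : Fin r × Fin (n+1) => Zs p.1 p.2) Q.det = 1 := by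
      rw [RingHom.map_det, RingHom.mapMatrix_apply, hA, Matrix.det_one]
    intro hzero
    rw [hzero, map_zero] at hval
    exact zero_ne_one hval
  · intro Z hgZ
    refine le_antisymm (rk_le Z t) ?_
    set A : Matrix (Fin m) (Fin m) k := Matrix.of fun a b => φ b (Et Z t (f a)) with hAdef
    have hdetA : A.det ≠ 0 := by
      intro h
      apply hgZ
      rw [(eval (fun p : Fin r × Fin (n+1) => Z p.1 p.2)).map_det Q, RingHom.mapMatrix_apply]
      have : Q.map (eval fun p : Fin r × Fin (n+1) => Z p.1 p.2) = A := by
        ext a b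
        rw [Matrix.map_apply, hQeval Z a b]
        rfl
      rw [this, h]
    set σl : (Fin m → k) →ₗ[k] (homogeneousSubmodule (Fin (n+1)) k t :
        Submodule k (MvPolynomial (Fin (n+1)) k)) := Fintype.linearCombination k f with hσdef
    set Φ : (Fin r → k) →ₗ[k] (Fin m → k) := LinearMap.pi φ with hΦdef
    have hψ : (Φ.comp ((Et Z t).comp σl)) = Matrix.toLin' Aᵀ := by
      refine LinearMap.ext fun c => funext fun b => ?_
      rw [Matrix.toLin'_apply]
      simp only [hσdef, hΦdef, LinearMap.comp_apply, Fintype.linearCombination_apply, map_sum,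
        _root_.map_smul, LinearMap.pi_apply, LinearMap.smul_apply]
      simp only [Matrix.mulVec, dotProduct, hAdef, Matrix.transpose_apply, Matrix.of_apply,
        smul_eq_mul]
      exact Finset.sum_congr rfl fun a _ => mul_comm _ _
    have hsurj : Function.Surjective (Φ.comp ((Et Z t).comp σl)) := by
      rw [hψ]
      have hunit : IsUnit Aᵀ.det := by
        rw [Matrix.det_transpose]
        exact Ne.isUnit hdetA
      haveI := Aᵀ.invertibleOfIsUnitDet hunit
      intro v
      refine ⟨Matrix.toLin' (Aᵀ)⁻¹ v, ?_⟩
      rw [← Matrix.toLin'_mul_apply, Matrix.mul_inv_of_invertible, Matrix.toLin'_one]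
      rfl
    have h1 : m = Module.finrank k (LinearMap.range (Φ.comp ((Et Z t).comp σl))) := by
      rw [LinearMap.range_eq_top.mpr hsurj, finrank_top]
      simp
    rw [h1]
    calc Module.finrank k (LinearMap.range (Φ.comp ((Et Z t).comp σl)))
        ≤ Module.finrank k (Submodule.map Φ (LinearMap.range (Et Z t))) := by
          apply Submodule.finrank_mono
          rw [LinearMap.range_comp]
          exact Submodule.map_mono (LinearMap.range_comp_le_range _ _)
      _ ≤ Module.finrank k (LinearMap.range (Et Z t)) := Submodule.finrank_map_le Φ _
      _ = rk Z t := rfl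

theorem exists_linear_form (Z : Fin r → (Fin (n+1) → k)) (hZ : ∀ i, Z i ≠ 0) :
    ∃ ℓ : MvPolynomial (Fin (n+1)) k, ℓ.IsHomogeneous 1 ∧ ∀ i, eval (Z i) ℓ ≠ 0 := by
  classical
  set P : MvPolynomial (Fin (n+1)) k := ∏ i : Fin r, (∑ j : Fin (n+1), C (Z i j) * X j) with hP
  have hfac : ∀ i : Fin r, (∑ j : Fin (n+1), C (Z i j) * X j) ≠ 0 := by
    intro i h
    obtain ⟨j, hj⟩ : ∃ j, Z i j ≠ 0 := by
      by_contra hc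
      push_neg at hc
      exact hZ i (funext hc)
    apply hj
    have := congrArg (coeff (Finsupp.single j 1)) h
    simpa [coeff_sum, coeff_C_mul, coeff_X', Finsupp.single_left_inj] using this
  have hPne : P ≠ 0 := Finset.prod_ne_zero_iff.mpr fun i _ => hfac i
  obtain ⟨c, hc⟩ : ∃ c, eval c P ≠ 0 := by
    by_contra h
    push_neg at h
    exact hPne (MvPolynomial.funext fun x => by simp [h x])
  refine ⟨∑ j : Fin (n+1), C (c j) * X j, ?_, ?_⟩
  · apply IsHomogeneous.sum
    intro j _
    simpa using (isHomogeneous_C (Fin (n+1)) (c j)).mul (isHomogeneous_X k j)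
  · intro i hi
    rw [hP] at hc
    rw [map_prod] at hc
    refine (Finset.prod_ne_zero_iff.mp hc i (Finset.mem_univ i)) ?_
    rw [← hi]
    simp [mul_comm]

theorem min_stab (t : ℕ) (ht : r ≤ t) :
    min ((n+t).choose n) r = min ((n+r).choose n) r := by
  rcases Nat.eq_zero_or_pos n with hn | hn
  · subst hn; simp
  · have h1 : ∀ s : ℕ, r ≤ s → r ≤ (n+s).choose n := by
      intro s hs
      calc r ≤ s + 1 := by omega
      _ = (s+1).choose s := (Nat.choose_succ_self_right s).symm
      _ ≤ (n+s).choose s := Nat.choose_le_choose s (by omega)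
      _ = (s+n).choose s := by rw [Nat.add_comm]
      _ = (s+n).choose n := Nat.choose_symm_add
      _ = (n+s).choose n := by rw [Nat.add_comm]
    rw [min_eq_right (h1 t ht), min_eq_right (h1 r le_rfl)]

end GenericHilbertAux

open GenericHilbertAux in
/-- For a tuple of `r` points of `ℙⁿ` in general position (genericity being expressed by the
nonvanishing of some nonzero polynomial `g` in the homogeneous coordinates of the points), the
Hilbert function of `S/I(Z)` at `t` equals `min (C(n+t, n)) r`; moreover for *every* tuple of
points the Hilbert function is at most this value. -/
theorem generic_hilbert_function_points (k : Type) [Field k] [IsAlgClosed k] [CharZero k]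
    (n r : ℕ) :
    (∃ g : MvPolynomial (Fin r × Fin (n + 1)) k, g ≠ 0 ∧
      ∀ Z : Fin r → (Fin (n + 1) → k), (∀ i, Z i ≠ 0) →
        eval (fun p => Z p.1 p.2) g ≠ 0 →
        ∀ t, hilbFn k (vanishingIdealPts k Z) t = min (Nat.choose (n + t) n) r) ∧
    ∀ Z : Fin r → (Fin (n + 1) → k), (∀ i, Z i ≠ 0) →
      ∀ t, hilbFn k (vanishingIdealPts k Z) t ≤ min (Nat.choose (n + t) n) r := by
  classical
  constructor
  · -- generic part
    choose G hG0 hG using fun t : ℕ => exists_certificate (k := k) (n := n) (r := r) t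
    refine ⟨∏ t ∈ Finset.range (r+1), G t, ?_, ?_⟩
    · exact Finset.prod_ne_zero_iff.mpr fun t _ => hG0 t
    · intro Z hZ0 hgZ t
      rw [map_prod] at hgZ
      have hG' : ∀ s ∈ Finset.range (r+1), rk Z s = min ((n+s).choose n) r := fun s hs =>
        hG s Z (Finset.prod_ne_zero_iff.mp hgZ s hs)
      rw [hilbFn_eq_rk]
      rcases le_or_gt t r with htr | htr
      · exact hG' t (Finset.mem_range.mpr (by omega))
      · -- t > r : use monotonicity from degree r
        obtain ⟨ℓ, hℓh, hℓnz⟩ := exists_linear_form Z hZ0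
        have hmono : ∀ s, r ≤ s → rk Z r ≤ rk Z s := by
          intro s hs
          induction s, hs using Nat.le_induction with
          | base => exact le_rfl
          | succ s hs ih => exact le_trans ih (rk_mono Z s ℓ hℓh hℓnz)
        have hr : rk Z r = min ((n+r).choose n) r :=
          hG' r (Finset.mem_range.mpr (by omega))
        have hstab := min_stab (n := n) (r := r) t (by omega)
        refine le_antisymm (rk_le Z t) ?_
        rw [hstab, ← hr]
        exact hmono t (by omega)
  · intro Z hZ0 t
    rw [hilbFn_eq_rk]
    exact rk_le Z t
end

section
/- Let F ∈ T_D be a homogeneous polynomial and let Z = (z_1,...,z_r) be points of P^n with F = Σ c_i (z_i · y)^D for constants c_i (apolarity lemma direction): then the vanishing ideal I(Z) ⊆ S is contained in the apolar ideal Ann(F) = {f ∈ S : f(∂_0,...,∂_n) F = 0}. Conversely, if I(Z) ⊆ Ann(F) then F admits such a Waring decomposition supported on Z. -/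
open MvPolynomial

/-- The differential operator `f(∂₀,…,∂ₙ)` associated to a polynomial `f`, applied to `F`:
each monomial `c·x^α` of `f` acts as `c·∂^α`. -/
noncomputable def diffOp (k : Type) [Field k] {n : ℕ} (f F : MvPolynomial (Fin (n + 1)) k) :
    MvPolynomial (Fin (n + 1)) k :=
  (AddMonoidAlgebra.coeff f).sum fun m c => c •
    ((List.ofFn fun i : Fin (n + 1) =>
      ((⇑(pderiv i) : MvPolynomial (Fin (n + 1)) k → MvPolynomial (Fin (n + 1)) k))^[m i]).foldr
        (· ∘ ·) id) F


namespace ApolarAux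

section ListLemmas
variable {α : Type*}

lemma foldr_ofFn_id : ∀ (N : ℕ),
    (List.ofFn fun _ : Fin N => @id α).foldr (· ∘ ·) id = id := by
  intro N
  induction N with
  | zero => simp
  | succ N ih =>
    rw [List.ofFn_succ, List.foldr_cons]
    simpa using ih

lemma foldr_ofFn_insert : ∀ (N : ℕ) (g : Fin N → α → α) (h : α → α) (j : Fin N),
    (∀ i, g i ∘ h = h ∘ g i) →
    (List.ofFn fun i => if i = j then h ∘ g i else g i).foldr (· ∘ ·) id
      = h ∘ (List.ofFn g).foldr (· ∘ ·) id := by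
  intro N
  induction N with
  | zero => exact fun g h j _ => j.elim0
  | succ N ih =>
    intro g h j hc
    induction j using Fin.cases with
    | zero =>
      rw [List.ofFn_succ, List.ofFn_succ, List.foldr_cons, List.foldr_cons]
      have : (List.ofFn fun i : Fin N =>
          if i.succ = (0 : Fin (N + 1)) then h ∘ g i.succ else g i.succ)
          = List.ofFn fun i : Fin N => g i.succ := by
        apply congrArg List.ofFn; funext i; simp [Fin.succ_ne_zero i]
      rw [this]
      simp only [if_pos rfl]
      rfl
    | succ j' =>
      rw [List.ofFn_succ, List.ofFn_succ, List.foldr_cons, List.foldr_cons]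
      have h1 : (List.ofFn fun i : Fin N =>
          if i.succ = j'.succ then h ∘ g i.succ else g i.succ)
          = List.ofFn fun i : Fin N =>
            if i = j' then h ∘ (fun t => g t.succ) i else (fun t => g t.succ) i := by
        apply congrArg List.ofFn; funext i; simp [Fin.succ_inj]
      rw [h1, ih (fun t => g t.succ) h j' (fun i => hc i.succ)]
      have h2 : (if (0 : Fin (N+1)) = j'.succ then h ∘ g 0 else g 0) = g 0 := by
        simp [(Fin.succ_ne_zero j').symm]
      rw [h2, ← Function.comp_assoc, hc 0]
      rfl

end ListLemmas

variable {k : Type} [Field k] {n : ℕ}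

/-- The monomial differential operator `∂^m`. -/
noncomputable def Dm (m : Fin (n + 1) →₀ ℕ) (F : MvPolynomial (Fin (n + 1)) k) :
    MvPolynomial (Fin (n + 1)) k :=
  ((List.ofFn fun i : Fin (n + 1) =>
      ((⇑(pderiv i) : MvPolynomial (Fin (n + 1)) k → MvPolynomial (Fin (n + 1)) k))^[m i]).foldr
    (· ∘ ·) id) F

lemma diffOp_eq (f F : MvPolynomial (Fin (n + 1)) k) :
    diffOp k f F = (AddMonoidAlgebra.coeff f).sum fun m c => c • Dm m F := rfl

lemma pderiv_pderiv (i j : Fin (n + 1)) (p : MvPolynomial (Fin (n + 1)) k) :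
    pderiv i (pderiv j p) = pderiv j (pderiv i p) := by
  induction p using MvPolynomial.induction_on' with
  | monomial s a =>
    simp only [pderiv_monomial]
    rcases eq_or_ne i j with rfl | hij
    · rfl
    · rw [Finsupp.tsub_apply, Finsupp.tsub_apply, Finsupp.single_apply, Finsupp.single_apply,
        if_neg hij, if_neg (Ne.symm hij), tsub_zero, tsub_zero, tsub_tsub, tsub_tsub,
        add_comm (Finsupp.single j 1), mul_assoc, mul_assoc, mul_comm (s j : k)]
  | add p q hp hq => simp [hp, hq]

lemma Dm_zero (F : MvPolynomial (Fin (n + 1)) k) : Dm 0 F = F := by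
  unfold Dm
  have : (List.ofFn fun i : Fin (n + 1) =>
      ((⇑(pderiv i) : MvPolynomial (Fin (n + 1)) k → _))^[((0 : (Fin (n+1)) →₀ ℕ) : (Fin (n+1)) → ℕ) i])
      = List.ofFn fun _ : Fin (n + 1) => id := by
    congr 1
  rw [this, foldr_ofFn_id]
  rfl

lemma Dm_single_add (j : Fin (n + 1)) (m : Fin (n + 1) →₀ ℕ)
    (F : MvPolynomial (Fin (n + 1)) k) :
    Dm (Finsupp.single j 1 + m) F = pderiv j (Dm m F) := by
  unfold Dm
  have hl : (List.ofFn fun i : Fin (n + 1) =>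
      ((⇑(pderiv i) : MvPolynomial (Fin (n + 1)) k → _))^[((Finsupp.single j 1 + m : (Fin (n+1)) →₀ ℕ) : (Fin (n+1)) → ℕ) i])
      = List.ofFn fun i : Fin (n + 1) =>
        if i = j then (⇑(pderiv j) : MvPolynomial (Fin (n + 1)) k → _) ∘
            (⇑(pderiv i) : MvPolynomial (Fin (n + 1)) k → _)^[m i]
          else (⇑(pderiv i) : MvPolynomial (Fin (n + 1)) k → _)^[m i] := by
    congr 1; funext i
    rcases eq_or_ne i j with rfl | hij
    · rw [if_pos rfl, Finsupp.add_apply, Finsupp.single_eq_same, Nat.add_comm 1 (m i),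
        Function.iterate_succ']
    · rw [if_neg hij, Finsupp.add_apply, Finsupp.single_eq_of_ne' (Ne.symm hij), zero_add]
  rw [hl, foldr_ofFn_insert (n + 1)
    (fun i => (⇑(pderiv i) : MvPolynomial (Fin (n + 1)) k → _)^[m i]) _ j ?_]
  · rfl
  · intro i
    funext p
    exact ((Function.Commute.iterate_left
      (fun q => pderiv_pderiv i j q) (m i)) p)

lemma Dm_induction {P : (Fin (n + 1) →₀ ℕ) → Prop} (h0 : P 0)
    (hs : ∀ (j : Fin (n + 1)) (m), P m → P (Finsupp.single j 1 + m)) :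
    ∀ m, P m := by
  intro m
  induction m using Finsupp.induction with
  | zero => exact h0
  | single_add a b f ha hb ih =>
    clear hb ha
    induction b with
    | zero => simpa using ih
    | succ b ihb =>
      have : Finsupp.single a (b + 1) + f = Finsupp.single a 1 + (Finsupp.single a b + f) := by
        rw [← add_assoc, ← Finsupp.single_add, add_comm b 1]
      rw [this]
      exact hs a _ ihb

lemma Dm_F_add (m : Fin (n + 1) →₀ ℕ) (F G : MvPolynomial (Fin (n + 1)) k) :
    Dm m (F + G) = Dm m F + Dm m G := by
  induction m using Dm_induction generalizing F G with
  | h0 => simp [Dm_zero]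
  | hs j m ih => rw [Dm_single_add, Dm_single_add, Dm_single_add, ih, map_add]

lemma Dm_F_smul (m : Fin (n + 1) →₀ ℕ) (c : k) (F : MvPolynomial (Fin (n + 1)) k) :
    Dm m (c • F) = c • Dm m F := by
  induction m using Dm_induction generalizing F with
  | h0 => simp [Dm_zero]
  | hs j m ih => rw [Dm_single_add, Dm_single_add, ih, Derivation.map_smul]

lemma Dm_F_zero (m : Fin (n + 1) →₀ ℕ) : Dm m (0 : MvPolynomial (Fin (n + 1)) k) = 0 := by
  induction m using Dm_induction with
  | h0 => simp [Dm_zero]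
  | hs j m ih => rw [Dm_single_add, ih, map_zero]

lemma Dm_add (m m' : Fin (n + 1) →₀ ℕ) (F : MvPolynomial (Fin (n + 1)) k) :
    Dm (m + m') F = Dm m (Dm m' F) := by
  induction m using Dm_induction with
  | h0 => rw [zero_add, Dm_zero]
  | hs j m ih => rw [add_assoc, Dm_single_add, Dm_single_add, ih]

/-- `diffOp` as a linear map in its second argument. -/
noncomputable def diffOpL (f : MvPolynomial (Fin (n + 1)) k) :
    MvPolynomial (Fin (n + 1)) k →ₗ[k] MvPolynomial (Fin (n + 1)) k where
  toFun F := diffOp k f F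
  map_add' F G := by
    simp only [diffOp_eq, Dm_F_add, smul_add]
    exact Finsupp.sum_add
  map_smul' c F := by
    simp only [diffOp_eq, Dm_F_smul, RingHom.id_apply, Finsupp.smul_sum]
    exact Finsupp.sum_congr fun m hm => smul_comm _ _ _

lemma diffOp_monomial (m : Fin (n + 1) →₀ ℕ) (c : k) (F : MvPolynomial (Fin (n + 1)) k) :
    diffOp k (monomial m c) F = c • Dm m F := by
  rw [diffOp_eq, ← single_eq_monomial]
  exact Finsupp.sum_single_index (by rw [zero_smul])

lemma diffOp_add_left (f g F : MvPolynomial (Fin (n + 1)) k) :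
    diffOp k (f + g) F = diffOp k f F + diffOp k g F := by
  simp only [diffOp_eq]
  exact Finsupp.sum_add_index' (fun m => zero_smul k _) (fun m c c' => add_smul c c' _)

lemma diffOp_zero_left (F : MvPolynomial (Fin (n + 1)) k) :
    diffOp k 0 F = 0 := by
  simp [diffOp_eq]

lemma diffOp_sum_left {ι : Type*} (s : Finset ι) (g : ι → MvPolynomial (Fin (n + 1)) k)
    (F : MvPolynomial (Fin (n + 1)) k) :
    diffOp k (∑ i ∈ s, g i) F = ∑ i ∈ s, diffOp k (g i) F := by
  classical
  induction s using Finset.induction with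
  | empty => simp [diffOp_zero_left]
  | insert _ _ hx ih => rw [Finset.sum_insert hx, Finset.sum_insert hx, diffOp_add_left, ih]

lemma diffOp_mul (f g F : MvPolynomial (Fin (n + 1)) k) :
    diffOp k (f * g) F = diffOp k f (diffOp k g F) := by
  induction f using MvPolynomial.induction_on' with
  | add p q hp hq => rw [add_mul, diffOp_add_left, hp, hq, diffOp_add_left]
  | monomial m c =>
    induction g using MvPolynomial.induction_on' with
    | add p q hp hq =>
      rw [mul_add, diffOp_add_left, hp, hq, diffOp_add_left]
      exact (map_add (diffOpL (monomial m c)) _ _).symm ▸ rfl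
    | monomial m' c' =>
      rw [monomial_mul, diffOp_monomial, diffOp_monomial, diffOp_monomial, Dm_F_smul,
        Dm_add, smul_smul]

lemma Dm_monomial (m m' : Fin (n + 1) →₀ ℕ) (c : k) :
    Dm m (monomial m' c) =
      monomial (m' - m) (c * ((∏ i, (m' i).descFactorial (m i) : ℕ) : k)) := by
  induction m using Dm_induction with
  | h0 => simp [Dm_zero]
  | hs j m ih =>
    rw [Dm_single_add, ih, pderiv_monomial]
    have he : m' - m - Finsupp.single j 1 = m' - (Finsupp.single j 1 + m) := by
      rw [tsub_tsub]
      exact congrArg (fun t => m' - t) (add_comm m (Finsupp.single j 1))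
    rw [he]
    congr 1
    have h1 : ∀ t : Fin (n + 1) → ℕ, (∏ i, (m' i).descFactorial (t i))
        = (m' j).descFactorial (t j) * ∏ i ∈ Finset.univ.erase j, (m' i).descFactorial (t i) :=
      fun t => (Finset.mul_prod_erase Finset.univ _ (Finset.mem_univ j)).symm
    have h2 : ∀ i ∈ Finset.univ.erase j,
        (m' i).descFactorial ((Finsupp.single j 1 + m : (Fin (n+1)) →₀ ℕ) i)
          = (m' i).descFactorial (m i) := by
      intro i hi
      rw [Finsupp.add_apply, Finsupp.single_eq_of_ne' (Ne.symm (Finset.mem_erase.mp hi).1),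
        zero_add]
    rw [h1 (fun i => (Finsupp.single j 1 + m : (Fin (n+1)) →₀ ℕ) i), Finset.prod_congr rfl h2,
      h1 (fun i => m i)]
    have h3 : (Finsupp.single j 1 + m : (Fin (n+1)) →₀ ℕ) j = m j + 1 := by
      rw [Finsupp.add_apply, Finsupp.single_eq_same, Nat.add_comm]
    rw [h3, Nat.descFactorial_succ, Finsupp.tsub_apply]
    push_cast
    ring

lemma coeff_zero_Dm_monomial (m m' : Fin (n + 1) →₀ ℕ) (c : k) :
    coeff 0 (Dm m (monomial m' c)) =
      if m' = m then c * ((∏ i, (m i).factorial : ℕ) : k) else 0 := by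
  rw [Dm_monomial, coeff_monomial]
  rcases eq_or_ne m' m with rfl | hne
  · rw [if_pos (by simp), if_pos rfl]
    simp [Nat.descFactorial_self]
  · rw [if_neg hne]
    rcases eq_or_ne (m' - m) 0 with hz | hnz
    · rw [if_pos hz]
      have hle : m' ≤ m := tsub_eq_zero_iff_le.mp hz
      obtain ⟨j, hj⟩ : ∃ j, m' j < m j := by
        by_contra hc
        push_neg at hc
        exact hne (le_antisymm hle (Finsupp.le_def.mpr hc))
      have : (∏ i, (m' i).descFactorial (m i)) = 0 :=
        Finset.prod_eq_zero (Finset.mem_univ j)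
          ((Nat.descFactorial_eq_zero_iff_lt).mpr hj)
      rw [this]
      simp
    · rw [if_neg hnz]

lemma degree_single_one_add (j : Fin (n + 1)) (m : Fin (n + 1) →₀ ℕ) :
    (Finsupp.single j 1 + m).degree = m.degree + 1 := by
  rw [Finsupp.degree_eq_weight_one, map_add]
  have h1 : (Finsupp.weight 1) (Finsupp.single j (1:ℕ)) = 1 := by
    simp [Finsupp.weight_apply, Finsupp.sum_single_index]
  erw [h1, add_comm]

lemma pderiv_L (z : Fin (n + 1) → k) (j : Fin (n + 1)) :
    pderiv j (∑ l, C (z l) * X l : MvPolynomial (Fin (n + 1)) k) = C (z j) := by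
  rw [map_sum]
  rw [Finset.sum_eq_single j]
  · rw [pderiv_C_mul, pderiv_X_self, mul_one]
  · intro l _ hl
    rw [pderiv_C_mul, pderiv_X_of_ne hl, mul_zero]
  · intro h
    exact absurd (Finset.mem_univ j) h

lemma Dm_pow (z : Fin (n + 1) → k) (D : ℕ) (m : Fin (n + 1) →₀ ℕ) :
    Dm m ((∑ l, C (z l) * X l : MvPolynomial (Fin (n + 1)) k) ^ D) =
      C (((D.descFactorial m.degree : ℕ) : k) * ∏ i, z i ^ m i) *
        (∑ l, C (z l) * X l) ^ (D - m.degree) := by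
  induction m using Dm_induction with
  | h0 => simp [Dm_zero]
  | hs j m ih =>
    rw [Dm_single_add, ih, pderiv_C_mul, pderiv_pow, pderiv_L, degree_single_one_add,
      Nat.descFactorial_succ]
    have hprod : (∏ i, z i ^ ((Finsupp.single j 1 + m : (Fin (n+1)) →₀ ℕ) i))
        = z j * ∏ i, z i ^ (m i) := by
      rw [← Finset.mul_prod_erase Finset.univ _ (Finset.mem_univ j),
        ← Finset.mul_prod_erase Finset.univ (fun i => z i ^ (m i)) (Finset.mem_univ j)]
      have h2 : ∀ i ∈ Finset.univ.erase j,
          z i ^ ((Finsupp.single j 1 + m : (Fin (n+1)) →₀ ℕ) i) = z i ^ (m i) := by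
        intro i hi
        rw [Finsupp.add_apply, Finsupp.single_eq_of_ne' (Ne.symm (Finset.mem_erase.mp hi).1),
          zero_add]
      rw [Finset.prod_congr rfl h2]
      have h3 : (Finsupp.single j 1 + m : (Fin (n+1)) →₀ ℕ) j = m j + 1 := by
        rw [Finsupp.add_apply, Finsupp.single_eq_same, Nat.add_comm]
      rw [h3, pow_succ]
      ring
    rw [hprod]
    have hexp : D - m.degree - 1 = D - (m.degree + 1) := by omega
    rw [← hexp]
    have hcast : ((D - m.degree : ℕ) : MvPolynomial (Fin (n + 1)) k)
        = C ((D - m.degree : ℕ) : k) := by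
      rw [C_eq_coe_nat]
    push_cast
    rw [hcast]
    simp only [map_mul]
    ring

lemma diffOp_F_smul (f : MvPolynomial (Fin (n + 1)) k) (c : k) (F : MvPolynomial (Fin (n + 1)) k) :
    diffOp k f (c • F) = c • diffOp k f F :=
  map_smul (diffOpL f) c F

lemma diffOp_F_sum (f : MvPolynomial (Fin (n + 1)) k) {ι : Type*} (s : Finset ι)
    (G : ι → MvPolynomial (Fin (n + 1)) k) :
    diffOp k f (∑ i ∈ s, G i) = ∑ i ∈ s, diffOp k f (G i) :=
  map_sum (diffOpL f) G s

lemma hom_support_degree {G : MvPolynomial (Fin (n + 1)) k} {e : ℕ}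
    (hG : G.IsHomogeneous e) {m : Fin (n + 1) →₀ ℕ} (hm : m ∈ G.support) :
    m.degree = e := by
  rw [Finsupp.degree_eq_weight_one]
  exact hG (mem_support_iff.mp hm)

lemma diffOp_L (z : Fin (n + 1) → k) (D e : ℕ) (f : MvPolynomial (Fin (n + 1)) k)
    (hf : f.IsHomogeneous e) :
    diffOp k f ((∑ l, C (z l) * X l : MvPolynomial (Fin (n + 1)) k) ^ D) =
      C (((D.descFactorial e : ℕ) : k) * eval z f) * (∑ l, C (z l) * X l) ^ (D - e) := by
  have hsum : diffOp k f ((∑ l, C (z l) * X l : MvPolynomial (Fin (n + 1)) k) ^ D)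
      = ∑ m ∈ f.support, (coeff m f) • Dm m ((∑ l, C (z l) * X l) ^ D) := rfl
  rw [hsum]
  have key : ∀ m ∈ f.support, (coeff m f) • Dm m
        ((∑ l, C (z l) * X l : MvPolynomial (Fin (n + 1)) k) ^ D)
      = C (((D.descFactorial e : ℕ) : k) * (coeff m f * ∏ i, z i ^ m i)) *
        (∑ l, C (z l) * X l) ^ (D - e) := by
    intro m hm
    rw [Dm_pow, hom_support_degree hf hm, smul_eq_C_mul, map_mul, map_mul, map_mul]
    ring
  rw [Finset.sum_congr rfl key, ← Finset.sum_mul, ← map_sum, ← Finset.mul_sum, eval_eq']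

end ApolarAux

open ApolarAux

/-- Apolarity Lemma.  For a form `F` of degree `D` and points `z₁,…,z_r ∈ ℙⁿ` (represented by
nonzero vectors), `F` admits a Waring decomposition `F = Σ cᵢ (zᵢ·y)^D` if and only if the
vanishing ideal `I(Z)` is contained in the apolar ideal `Ann(F) = {f : f(∂)F = 0}`. -/
theorem apolarity_lemma (k : Type) [Field k] [IsAlgClosed k] [CharZero k] (n r D : ℕ)
    (Z : Fin r → (Fin (n + 1) → k)) (hZ0 : ∀ i, Z i ≠ 0)
    (F : MvPolynomial (Fin (n + 1)) k) (hF : F.IsHomogeneous D) :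
    (∃ c : Fin r → k,
        F = ∑ i, C (c i) * (∑ j, C (Z i j) * X j) ^ D) ↔
      ∀ f ∈ vanishingIdealPts k Z, diffOp k f F = 0 := by
  classical
  set L : Fin r → MvPolynomial (Fin (n + 1)) k := fun i => ∑ j, C (Z i j) * X j with hLdef
  constructor
  · rintro ⟨c, rfl⟩ f hf
    rw [vanishingIdealPts] at hf
    induction hf using Submodule.span_induction with
    | mem x hx =>
      obtain ⟨⟨e, he⟩, hz⟩ := hx
      have hsum : diffOp k x (∑ i, C (c i) * L i ^ D) = ∑ i, diffOp k x (C (c i) * L i ^ D) :=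
        map_sum (diffOpL x) _ _
      rw [hsum]
      refine Finset.sum_eq_zero fun i _ => ?_
      rw [C_mul', diffOp_F_smul]
      rw [diffOp_L (Z i) D e x he, hz i, mul_zero, map_zero, zero_mul, smul_zero]
    | zero => exact diffOp_zero_left _
    | add x y hx hy ihx ihy => rw [diffOp_add_left, ihx, ihy, add_zero]
    | smul a x hx ih =>
      rw [smul_eq_mul, diffOp_mul, ih]
      exact map_zero (diffOpL a)
  · intro H
    have hmem : F ∈ Submodule.span k (Set.range fun i => L i ^ D) := by
      by_contra hF'
      obtain ⟨φ, hφF, hφW⟩ := Submodule.exists_dual_map_eq_bot_of_notMem hF' inferInstance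
      have hφ0 : ∀ x ∈ Submodule.span k (Set.range fun i => L i ^ D), φ x = 0 := by
        intro x hx
        have : φ x ∈ (⊥ : Submodule k k) := hφW ▸ Submodule.mem_map_of_mem hx
        exact (Submodule.mem_bot k).mp this
      have hLhom : ∀ i, (L i ^ D).IsHomogeneous D := fun i => by
        have h1 : (L i).IsHomogeneous 1 :=
          IsHomogeneous.sum _ _ _ (fun j _ => isHomogeneous_C_mul_X _ _)
        simpa using h1.pow D
      set S : Finset ((Fin (n + 1)) →₀ ℕ) :=
        F.support ∪ Finset.univ.biUnion (fun i => (L i ^ D).support) with hS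
      have hSdeg : ∀ m ∈ S, Finsupp.degree m = D := by
        intro m hm
        rcases Finset.mem_union.mp hm with h | h
        · exact hom_support_degree hF h
        · obtain ⟨i, _, hi⟩ := Finset.mem_biUnion.mp h
          exact hom_support_degree (hLhom i) hi
      have hfact : ∀ m : (Fin (n + 1)) →₀ ℕ, (((∏ i, (m i).factorial : ℕ) : k)) ≠ 0 :=
        fun m => Nat.cast_ne_zero.mpr
          (Finset.prod_ne_zero_iff.mpr fun i _ => Nat.factorial_ne_zero _)
      set f₀ : MvPolynomial (Fin (n + 1)) k :=
        ∑ m ∈ S, monomial m (φ (monomial m 1) / ((∏ i, (m i).factorial : ℕ) : k)) with hf₀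
      have hB : ∀ G : MvPolynomial (Fin (n + 1)) k, G.support ⊆ S →
          coeff 0 (diffOp k f₀ G) = φ G := by
        intro G hG
        conv_lhs => rw [← support_sum_monomial_coeff G]
        conv_rhs => rw [← support_sum_monomial_coeff G]
        rw [diffOp_F_sum, coeff_sum, map_sum]
        refine Finset.sum_congr rfl fun m' hm' => ?_
        show coeff 0 (diffOp k f₀ (monomial m' (coeff m' G))) = φ (monomial m' (coeff m' G))
        rw [hf₀, diffOp_sum_left, coeff_sum]
        have hterm : ∀ m ∈ S,
            coeff 0 (diffOp k (monomial m (φ (monomial m 1) / ((∏ i, (m i).factorial : ℕ) : k)))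
              (monomial m' (coeff m' G)))
            = if m' = m then
                (φ (monomial m 1) / ((∏ i, (m i).factorial : ℕ) : k)) *
                  (coeff m' G * ((∏ i, (m i).factorial : ℕ) : k)) else 0 := by
          intro m _
          rw [diffOp_monomial, coeff_smul, coeff_zero_Dm_monomial, smul_eq_mul]
          split <;> simp
        rw [Finset.sum_congr rfl hterm, Finset.sum_ite_eq (s := S)]
        rw [if_pos (hG hm')]
        have hmono : monomial m' (coeff m' G) = (coeff m' G) • monomial m' (1 : k) := by
          rw [smul_monomial, smul_eq_mul, mul_one]
        rw [hmono, map_smul, smul_eq_mul,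
          mul_comm (coeff m' G) ((((∏ i, (m' i).factorial : ℕ)) : k)), ← mul_assoc,
          div_mul_cancel₀ _ (hfact m'), mul_comm]
      have hf₀hom : f₀.IsHomogeneous D :=
        IsHomogeneous.sum _ _ _ (fun m hm => isHomogeneous_monomial _ (hSdeg m hm))
      have heval : ∀ i, eval (Z i) f₀ = 0 := by
        intro i
        have hsub : (L i ^ D).support ⊆ S := by
          intro m hm
          exact Finset.mem_union_right _ (Finset.mem_biUnion.mpr ⟨i, Finset.mem_univ i, hm⟩)
        have h1 : coeff 0 (diffOp k f₀ (L i ^ D)) = φ (L i ^ D) := hB _ hsub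
        have h2 : φ (L i ^ D) = 0 := hφ0 _ (Submodule.subset_span ⟨i, rfl⟩)
        rw [h2, diffOp_L (Z i) D D f₀ hf₀hom, Nat.sub_self, pow_zero, mul_one,
          Nat.descFactorial_self] at h1
        have h3 : ((D.factorial : ℕ) : k) ≠ 0 :=
          Nat.cast_ne_zero.mpr (Nat.factorial_ne_zero D)
        have h4 : coeff 0 (C (((D.factorial : ℕ) : k) * eval (Z i) f₀)
            : MvPolynomial (Fin (n + 1)) k) = ((D.factorial : ℕ) : k) * eval (Z i) f₀ :=
          coeff_zero_C _
        rw [h4] at h1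
        exact (mul_eq_zero.mp h1).resolve_left h3
      have hf₀mem : f₀ ∈ vanishingIdealPts k Z :=
        Ideal.subset_span ⟨⟨D, hf₀hom⟩, heval⟩
      have hFB : coeff 0 (diffOp k f₀ F) = φ F :=
        hB F Finset.subset_union_left
      rw [H f₀ hf₀mem] at hFB
      simp only [coeff_zero] at hFB
      exact hφF hFB.symm
    obtain ⟨c, hc⟩ := (Submodule.mem_span_range_iff_exists_fun k).mp hmem
    refine ⟨c, ?_⟩
    rw [← hc]
    exact Finset.sum_congr rfl fun i _ => C_mul'.symm
end

section
/- Let I be the monomial ideal ⟨x^3 y^2, y^3 z^2, z^3 x^2, x^2 y^2 z^2⟩ in S = k[x, y, z]. Then S/I has Hilbert function h_{S/I}(t) = min(binom(t+2, 2), 18) for all t ≥ 0, and the chopped ideal J = ⟨x^3 y^2, y^3 z^2, z^3 x^2⟩ (generated by the degree-5 part of I) satisfies h_{S/J}(6) = 19 and h_{S/J}(7) = 18. -/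
open MvPolynomial Finsupp Module Submodule

section Aux

variable {k : Type} [Field k]

lemma finrank_span_monomials' (s : Set (Fin (2+1) →₀ ℕ)) (hs : s.Finite) :
    Module.finrank k (Submodule.span k ((fun d => (monomial d (1:k) : MvPolynomial (Fin (2+1)) k)) '' s))
      = hs.toFinset.card := by
  classical
  have hfin : ((fun d => (monomial d (1:k) : MvPolynomial (Fin (2+1)) k)) '' s).Finite := hs.image _
  haveI := hfin.fintype
  have hli : LinearIndependent k ((↑) : ((fun d => (monomial d (1:k) : MvPolynomial (Fin (2+1)) k)) '' s) → MvPolynomial (Fin (2+1)) k) := by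
    have h0 : LinearIndepOn k id (Set.range (basisMonomials (Fin (2+1)) k)) := (basisMonomials (Fin (2+1)) k).linearIndependent.linearIndepOn_id
    suffices h1 : (fun d => (monomial d (1:k) : MvPolynomial (Fin (2+1)) k)) '' s ⊆ Set.range (basisMonomials (Fin (2+1)) k) from h0.mono h1
    rintro _ ⟨d, -, rfl⟩
    exact ⟨d, by simp [coe_basisMonomials]⟩
  rw [finrank_span_set_eq_card hli]
  have h2 : hfin.toFinset = hs.toFinset.image (fun d => (monomial d (1:k) : MvPolynomial (Fin (2+1)) k)) := by
    ext p; simp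
  rw [Set.toFinset_card, ← Set.Finite.card_toFinset hfin, h2,
    Finset.card_image_of_injective _ (monomial_left_injective one_ne_zero)]

lemma homog_eq_span' (t : ℕ) :
    homogeneousSubmodule (Fin (2+1)) k t
      = Submodule.span k ((fun d => (monomial d (1:k) : MvPolynomial (Fin (2+1)) k)) ''
          {d | d.degree = t}) := by
  apply le_antisymm
  · intro p hp
    rw [mem_homogeneousSubmodule] at hp
    rw [p.as_sum]
    refine Submodule.sum_mem _ fun d hd => ?_
    have : (monomial d (coeff d p) : MvPolynomial (Fin (2+1)) k) = coeff d p • monomial d (1:k) := by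
      simp [smul_monomial]
    rw [this]
    exact Submodule.smul_mem _ _ (Submodule.subset_span ⟨d, by rw [Set.mem_setOf_eq, degree_eq_weight_one]; exact hp (MvPolynomial.mem_support_iff.mp hd), rfl⟩)
  · rw [Submodule.span_le]
    rintro _ ⟨d, hd, rfl⟩
    exact isHomogeneous_monomial _ hd

lemma inf_eq_span' (E : Set (Fin (2+1) →₀ ℕ)) (t : ℕ) :
    (Submodule.restrictScalars k
        (Ideal.span ((fun d => (monomial d (1:k) : MvPolynomial (Fin (2+1)) k)) '' E))
      ⊓ homogeneousSubmodule (Fin (2+1)) k t : Submodule k (MvPolynomial (Fin (2+1)) k))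
      = Submodule.span k ((fun d => (monomial d (1:k) : MvPolynomial (Fin (2+1)) k)) ''
          {d | d.degree = t ∧ ∃ e ∈ E, e ≤ d}) := by
  apply le_antisymm
  · intro p hp
    rw [Submodule.mem_inf] at hp
    obtain ⟨hpI, hpt⟩ := hp
    rw [Submodule.restrictScalars_mem, mem_ideal_span_monomial_image] at hpI
    rw [mem_homogeneousSubmodule] at hpt
    rw [p.as_sum]
    refine Submodule.sum_mem _ fun d hd => ?_
    have : (monomial d (coeff d p) : MvPolynomial (Fin (2+1)) k) = coeff d p • monomial d (1:k) := by
      simp [smul_monomial]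
    rw [this]
    exact Submodule.smul_mem _ _ (Submodule.subset_span
      ⟨d, ⟨by rw [degree_eq_weight_one]; exact hpt (MvPolynomial.mem_support_iff.mp hd), hpI d hd⟩, rfl⟩)
  · classical
    rw [Submodule.span_le]
    rintro _ ⟨d, ⟨hdt, e, he, hed⟩, rfl⟩
    refine ⟨?_, isHomogeneous_monomial _ hdt⟩
    rw [SetLike.mem_coe, Submodule.restrictScalars_mem, mem_ideal_span_monomial_image]
    intro xi hxi
    rw [support_monomial, if_neg (one_ne_zero)] at hxi
    rw [Finset.mem_singleton] at hxi
    subst hxi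
    exact ⟨e, he, hed⟩

lemma degree_eq_sum3 (d : Fin (2+1) →₀ ℕ) : d.degree = d 0 + d 1 + d 2 := by
  classical
  have h : d.degree = ∑ i : Fin 3, d i := by
    rw [Finsupp.degree]
    exact Finset.sum_subset (Finset.subset_univ _)
      (fun i _ hi => Finsupp.notMem_support_iff.mp hi)
  rw [h, Fin.sum_univ_three]

lemma finite_deg' (t : ℕ) : {d : Fin (2+1) →₀ ℕ | d.degree = t}.Finite := by
  classical
  have h1 : {d : Fin (2+1) →₀ ℕ | d.degree = t} = {d : Fin (2+1) →₀ ℕ | d.sum (fun _ => id) = t} := by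
    ext d
    simp only [Set.mem_setOf_eq, Finsupp.degree, Finsupp.sum, id, AddMonoidHom.coe_mk, ZeroHom.coe_mk]
    exact Iff.rfl
  rw [h1]
  exact Set.Finite.ofFinset ((Finset.univ.image (fun s : Sym (Fin (2+1)) t => (Sym.equivNatSum (Fin (2+1)) t s : Fin (2+1) →₀ ℕ))))
    (by intro d
        simp only [Finset.mem_image, Finset.mem_univ, true_and, Set.mem_setOf_eq]
        constructor
        · rintro ⟨s, rfl⟩; exact (Sym.equivNatSum (Fin (2+1)) t s).2
        · intro hd; exact ⟨(Sym.equivNatSum (Fin (2+1)) t).symm ⟨d, hd⟩, by simp⟩)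

lemma card_deg' (t : ℕ) : (finite_deg' t).toFinset.card = (t + 2).choose 2 := by
  classical
  haveI := (finite_deg' t).fintype
  rw [Set.Finite.card_toFinset]
  have e : {d : Fin (2+1) →₀ ℕ | d.degree = t} ≃ Sym (Fin (2+1)) t :=
    (Equiv.subtypeEquivRight (fun d => Iff.rfl)).trans (Sym.equivNatSum (Fin (2+1)) t).symm
  rw [Fintype.card_congr e, Sym.card_sym_eq_choose]
  have h1 : Fintype.card (Fin (2+1)) + t - 1 = t + 2 := by simp; omega
  rw [h1]
  have h3 : (t + 2).choose t = (t + 2).choose 2 := by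
    have h4 := Nat.choose_symm (n := t + 2) (k := 2) (by omega)
    simpa using h4
  exact h3

lemma hilb_monomial (E : Finset (Fin (2+1) →₀ ℕ)) (t : ℕ) :
    hilbFn k (Ideal.span ((fun d => (monomial d (1:k) : MvPolynomial (Fin (2+1)) k)) '' ↑E)) t
      = ((finite_deg' t).toFinset.filter (fun d => ¬ ∃ e ∈ E, e ≤ d)).card := by
  classical
  have hsub : {d : Fin (2+1) →₀ ℕ | d.degree = t ∧ ∃ e ∈ (↑E : Set _), e ≤ d}.Finite :=
    (finite_deg' t).subset (fun d hd => hd.1)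
  unfold hilbFn
  rw [inf_eq_span' (↑E) t, finrank_span_monomials' _ hsub, homog_eq_span' t,
    finrank_span_monomials' _ (finite_deg' t), card_deg']
  have h1 : hsub.toFinset = (finite_deg' t).toFinset.filter (fun d => ∃ e ∈ E, e ≤ d) := by
    ext d
    simp [Set.Finite.mem_toFinset]
  rw [h1]
  have h2 := Finset.card_filter_add_card_filter_not
    (s := (finite_deg' t).toFinset) (p := fun d => ∃ e ∈ E, e ≤ d)
  have h3 := card_deg' t
  omega

lemma count_triples (t : ℕ) (Q : (Fin (2+1) →₀ ℕ) → Prop) (R : ℕ × ℕ × ℕ → Prop)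
    [DecidablePred Q] [DecidablePred R]
    (hQR : ∀ d : Fin (2+1) →₀ ℕ, d.degree = t → (Q d ↔ R (d 0, d 1, d 2))) :
    ((finite_deg' t).toFinset.filter Q).card
      = ((Finset.range (t+1) ×ˢ Finset.range (t+1) ×ˢ Finset.range (t+1)).filter
          (fun p => p.1 + p.2.1 + p.2.2 = t ∧ R p)).card := by
  classical
  refine Finset.card_bij (fun d _ => (d 0, d 1, d 2)) ?_ ?_ ?_
  · intro d hd
    rw [Finset.mem_filter, Set.Finite.mem_toFinset] at hd
    obtain ⟨hdt, hQ⟩ := hd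
    have hsum : d 0 + d 1 + d 2 = t := by rw [← degree_eq_sum3 d]; exact hdt
    simp only [Finset.mem_filter, Finset.mem_product, Finset.mem_range]
    exact ⟨⟨by omega, by omega, by omega⟩, hsum, (hQR d hdt).mp hQ⟩
  · intro d1 h1 d2 h2 heq
    simp only [Prod.mk.injEq] at heq
    ext i
    fin_cases i
    · exact heq.1
    · exact heq.2.1
    · exact heq.2.2
  · intro p hp
    rw [Finset.mem_filter] at hp
    obtain ⟨-, hsum, hR⟩ := hp
    refine ⟨Finsupp.equivFunOnFinite.symm ![p.1, p.2.1, p.2.2], ?_, ?_⟩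
    · have hv : ∀ i : Fin (2+1), (Finsupp.equivFunOnFinite.symm ![p.1, p.2.1, p.2.2]) i
          = ![p.1, p.2.1, p.2.2] i := fun i => rfl
      have hdeg : (Finsupp.equivFunOnFinite.symm ![p.1, p.2.1, p.2.2]).degree = t := by
        rw [degree_eq_sum3, hv 0, hv 1, hv 2]
        simpa using hsum
      rw [Finset.mem_filter, Set.Finite.mem_toFinset]
      refine ⟨hdeg, (hQR _ hdeg).mpr ?_⟩
      rw [hv 0, hv 1, hv 2]
      simpa using hR
    · show ((Finsupp.equivFunOnFinite.symm ![p.1, p.2.1, p.2.2]) 0, _, _) = p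
      simp [Finsupp.equivFunOnFinite]

lemma le_iff_coords (e d : Fin (2+1) →₀ ℕ) :
    e ≤ d ↔ e 0 ≤ d 0 ∧ e 1 ≤ d 1 ∧ e 2 ≤ d 2 := by
  rw [Finsupp.le_def]
  constructor
  · intro h; exact ⟨h 0, h 1, h 2⟩
  · rintro ⟨h0, h1, h2⟩ i
    fin_cases i
    · exact h0
    · exact h1
    · exact h2

def P4 (p : ℕ × ℕ × ℕ) : Prop :=
  (3 ≤ p.1 ∧ 2 ≤ p.2.1) ∨ (3 ≤ p.2.1 ∧ 2 ≤ p.2.2) ∨ (3 ≤ p.2.2 ∧ 2 ≤ p.1) ∨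
    (2 ≤ p.1 ∧ 2 ≤ p.2.1 ∧ 2 ≤ p.2.2)

instance : DecidablePred P4 := fun p => by unfold P4; infer_instance

def P3 (p : ℕ × ℕ × ℕ) : Prop :=
  (3 ≤ p.1 ∧ 2 ≤ p.2.1) ∨ (3 ≤ p.2.1 ∧ 2 ≤ p.2.2) ∨ (3 ≤ p.2.2 ∧ 2 ≤ p.1)

instance : DecidablePred P3 := fun p => by unfold P3; infer_instance

def L18 (s : ℕ) : List (ℕ × ℕ × ℕ) :=
  [(0,0,s+5),(0,1,s+4),(0,2,s+3),(0,s+4,1),(0,s+5,0),(1,0,s+4),(1,1,s+3),(1,2,s+2),(1,s+3,1),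
   (1,s+4,0),(2,s+2,1),(2,s+3,0),(s+2,1,2),(s+3,0,2),(s+3,1,1),(s+4,0,1),(s+4,1,0),(s+5,0,0)]

set_option maxHeartbeats 1000000 in
lemma mem_iff18 (s a b c : ℕ) :
    ((a < s+5+1 ∧ b < s+5+1 ∧ c < s+5+1) ∧ a + b + c = s + 5 ∧ ¬ P4 (a,b,c)) ↔
      (a,b,c) ∈ L18 s := by
  simp only [L18, List.mem_cons, List.not_mem_nil, or_false, Prod.mk.injEq, P4, not_or, not_and]
  constructor
  · rintro ⟨⟨ha, hb, hc⟩, hsum, h1, h2, h3, h4⟩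
    rcases Nat.lt_or_ge c 2 with hc2 | hc2
    · rcases Nat.lt_or_ge a 3 with ha3 | ha3
      · rcases Nat.lt_or_ge c 1 with hc1 | hc1
        · -- c = 0, a ≤ 2
          rcases Nat.lt_or_ge a 1 with h | h
          · exact Or.inr (Or.inr (Or.inr (Or.inr (Or.inl (by omega)))))
          · rcases Nat.lt_or_ge a 2 with h' | h'
            · exact Or.inr (Or.inr (Or.inr (Or.inr (Or.inr (Or.inr (Or.inr (Or.inr (Or.inr (Or.inl (by omega))))))))))
            · exact Or.inr (Or.inr (Or.inr (Or.inr (Or.inr (Or.inr (Or.inr (Or.inr (Or.inr (Or.inr (Or.inr (Or.inl (by omega))))))))))))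
        · -- c = 1, a ≤ 2
          rcases Nat.lt_or_ge a 1 with h | h
          · exact Or.inr (Or.inr (Or.inr (Or.inl (by omega))))
          · rcases Nat.lt_or_ge a 2 with h' | h'
            · exact Or.inr (Or.inr (Or.inr (Or.inr (Or.inr (Or.inr (Or.inr (Or.inr (Or.inl (by omega)))))))))
            · exact Or.inr (Or.inr (Or.inr (Or.inr (Or.inr (Or.inr (Or.inr (Or.inr (Or.inr (Or.inr (Or.inl (by omega)))))))))))
      · -- a ≥ 3, hence b ≤ 1
        have hb1 : b ≤ 1 := by omega
        rcases Nat.lt_or_ge c 1 with hc1 | hc1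
        · rcases Nat.lt_or_ge b 1 with h | h
          · exact Or.inr (Or.inr (Or.inr (Or.inr (Or.inr (Or.inr (Or.inr (Or.inr (Or.inr (Or.inr (Or.inr (Or.inr (Or.inr (Or.inr (Or.inr (Or.inr (Or.inr (by omega)))))))))))))))))
          · exact Or.inr (Or.inr (Or.inr (Or.inr (Or.inr (Or.inr (Or.inr (Or.inr (Or.inr (Or.inr (Or.inr (Or.inr (Or.inr (Or.inr (Or.inr (Or.inr (Or.inl (by omega)))))))))))))))))
        · rcases Nat.lt_or_ge b 1 with h | h
          · exact Or.inr (Or.inr (Or.inr (Or.inr (Or.inr (Or.inr (Or.inr (Or.inr (Or.inr (Or.inr (Or.inr (Or.inr (Or.inr (Or.inr (Or.inr (Or.inl (by omega))))))))))))))))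
          · exact Or.inr (Or.inr (Or.inr (Or.inr (Or.inr (Or.inr (Or.inr (Or.inr (Or.inr (Or.inr (Or.inr (Or.inr (Or.inr (Or.inr (Or.inl (by omega)))))))))))))))
    · -- c ≥ 2, hence b ≤ 2
      have hb2 : b ≤ 2 := by omega
      rcases Nat.lt_or_ge a 2 with ha2 | ha2
      · rcases Nat.lt_or_ge a 1 with h | h
        · rcases Nat.lt_or_ge b 1 with h' | h'
          · exact Or.inl (by omega)
          · rcases Nat.lt_or_ge b 2 with h'' | h''
            · exact Or.inr (Or.inl (by omega))
            · exact Or.inr (Or.inr (Or.inl (by omega)))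
        · rcases Nat.lt_or_ge b 1 with h' | h'
          · exact Or.inr (Or.inr (Or.inr (Or.inr (Or.inr (Or.inl (by omega))))))
          · rcases Nat.lt_or_ge b 2 with h'' | h''
            · exact Or.inr (Or.inr (Or.inr (Or.inr (Or.inr (Or.inr (Or.inl (by omega)))))))
            · exact Or.inr (Or.inr (Or.inr (Or.inr (Or.inr (Or.inr (Or.inr (Or.inl (by omega))))))))
      · -- a ≥ 2: then c = 2 and b ≤ 1
        have hc2' : c = 2 := by omega
        have hb1 : b ≤ 1 := by omega
        rcases Nat.lt_or_ge b 1 with h | h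
        · exact Or.inr (Or.inr (Or.inr (Or.inr (Or.inr (Or.inr (Or.inr (Or.inr (Or.inr (Or.inr (Or.inr (Or.inr (Or.inr (Or.inl (by omega))))))))))))))
        · exact Or.inr (Or.inr (Or.inr (Or.inr (Or.inr (Or.inr (Or.inr (Or.inr (Or.inr (Or.inr (Or.inr (Or.inr (Or.inl (by omega)))))))))))))
  · rintro (h|h|h|h|h|h|h|h|h|h|h|h|h|h|h|h|h|h)
    all_goals exact ⟨⟨by omega, by omega, by omega⟩, by omega,
      fun _ => by omega, fun _ => by omega, fun _ => by omega, fun _ _ => by omega⟩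

set_option maxHeartbeats 1000000 in
lemma nodup18 (s : ℕ) : (L18 s).Nodup := by
  simp only [L18, List.nodup_cons, List.mem_cons, List.not_mem_nil, or_false, List.nodup_nil,
    and_true, Prod.mk.injEq, not_or, not_and]
  norm_num

lemma count18 (t : ℕ) (ht : 5 ≤ t) :
    ((Finset.range (t+1) ×ˢ Finset.range (t+1) ×ˢ Finset.range (t+1)).filter
      (fun p => p.1 + p.2.1 + p.2.2 = t ∧ ¬ P4 p)).card = 18 := by
  classical
  obtain ⟨s, rfl⟩ : ∃ s, t = s + 5 := ⟨t - 5, by omega⟩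
  have hset : ((Finset.range (s+5+1) ×ˢ Finset.range (s+5+1) ×ˢ Finset.range (s+5+1)).filter
      (fun p => p.1 + p.2.1 + p.2.2 = s+5 ∧ ¬ P4 p)) = (L18 s).toFinset := by
    ext ⟨a, b, c⟩
    rw [Finset.mem_filter, Finset.mem_product, Finset.mem_product, List.mem_toFinset]
    rw [← mem_iff18 s a b c]
    simp only [Finset.mem_range]
  rw [hset, List.card_toFinset, List.dedup_eq_self.mpr (nodup18 s)]
  rfl

lemma count_chop6 :
    ((Finset.range (6+1) ×ˢ Finset.range (6+1) ×ˢ Finset.range (6+1)).filter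
      (fun p => p.1 + p.2.1 + p.2.2 = 6 ∧ ¬ P3 p)).card = 19 := by decide

lemma count_chop7 :
    ((Finset.range (7+1) ×ˢ Finset.range (7+1) ×ˢ Finset.range (7+1)).filter
      (fun p => p.1 + p.2.1 + p.2.2 = 7 ∧ ¬ P3 p)).card = 18 := by decide

end Aux

section Main

variable {k : Type} [Field k]

noncomputable def f1 : Fin (2+1) →₀ ℕ := Finsupp.single 0 3 + Finsupp.single 1 2
noncomputable def f2 : Fin (2+1) →₀ ℕ := Finsupp.single 1 3 + Finsupp.single 2 2
noncomputable def f3 : Fin (2+1) →₀ ℕ := Finsupp.single 2 3 + Finsupp.single 0 2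
noncomputable def f4 : Fin (2+1) →₀ ℕ := Finsupp.single 0 2 + Finsupp.single 1 2 + Finsupp.single 2 2

lemma f1v : f1 0 = 3 ∧ f1 1 = 2 ∧ f1 2 = 0 := by refine ⟨?_, ?_, ?_⟩ <;> simp [f1, Finsupp.single_apply]
lemma f2v : f2 0 = 0 ∧ f2 1 = 3 ∧ f2 2 = 2 := by refine ⟨?_, ?_, ?_⟩ <;> simp [f2, Finsupp.single_apply]
lemma f3v : f3 0 = 2 ∧ f3 1 = 0 ∧ f3 2 = 3 := by refine ⟨?_, ?_, ?_⟩ <;> simp [f3, Finsupp.single_apply]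
lemma f4v : f4 0 = 2 ∧ f4 1 = 2 ∧ f4 2 = 2 := by refine ⟨?_, ?_, ?_⟩ <;> simp [f4, Finsupp.single_apply]

lemma hm1 : (X 0 : MvPolynomial (Fin (2+1)) k) ^ 3 * X 1 ^ 2 = monomial f1 1 := by
  rw [X_pow_eq_monomial, X_pow_eq_monomial, monomial_mul, one_mul]; rfl
lemma hm2 : (X 1 : MvPolynomial (Fin (2+1)) k) ^ 3 * X 2 ^ 2 = monomial f2 1 := by
  rw [X_pow_eq_monomial, X_pow_eq_monomial, monomial_mul, one_mul]; rfl
lemma hm3 : (X 2 : MvPolynomial (Fin (2+1)) k) ^ 3 * X 0 ^ 2 = monomial f3 1 := by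
  rw [X_pow_eq_monomial, X_pow_eq_monomial, monomial_mul, one_mul]; rfl
lemma hm4 : (X 0 : MvPolynomial (Fin (2+1)) k) ^ 2 * X 1 ^ 2 * X 2 ^ 2 = monomial f4 1 := by
  rw [X_pow_eq_monomial, X_pow_eq_monomial, X_pow_eq_monomial, monomial_mul, monomial_mul,
    one_mul, one_mul]; rfl

lemma himg4 : ({(X 0 : MvPolynomial (Fin (2+1)) k) ^ 3 * X 1 ^ 2,
    X 1 ^ 3 * X 2 ^ 2, X 2 ^ 3 * X 0 ^ 2, X 0 ^ 2 * X 1 ^ 2 * X 2 ^ 2} : Set _)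
    = (fun d => (monomial d (1:k) : MvPolynomial (Fin (2+1)) k)) '' ↑({f1, f2, f3, f4} : Finset _) := by
  rw [hm1, hm2, hm3, hm4]
  simp [Set.image_insert_eq]

lemma himg3 : ({(X 0 : MvPolynomial (Fin (2+1)) k) ^ 3 * X 1 ^ 2,
    X 1 ^ 3 * X 2 ^ 2, X 2 ^ 3 * X 0 ^ 2} : Set _)
    = (fun d => (monomial d (1:k) : MvPolynomial (Fin (2+1)) k)) '' ↑({f1, f2, f3} : Finset _) := by
  rw [hm1, hm2, hm3]
  simp [Set.image_insert_eq]

lemma hQR4 (t : ℕ) : ∀ d : Fin (2+1) →₀ ℕ, d.degree = t →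
    ((¬ ∃ e ∈ ({f1, f2, f3, f4} : Finset _), e ≤ d) ↔ ¬ P4 (d 0, d 1, d 2)) := by
  intro d _
  apply not_congr
  simp only [Finset.mem_insert, Finset.mem_singleton, exists_eq_or_imp, exists_eq_left,
    le_iff_coords, P4]
  rw [f1v.1, f1v.2.1, f1v.2.2, f2v.1, f2v.2.1, f2v.2.2, f3v.1, f3v.2.1, f3v.2.2,
    f4v.1, f4v.2.1, f4v.2.2]
  constructor
  · rintro (⟨h1, h2, h3⟩ | ⟨h1, h2, h3⟩ | ⟨h1, h2, h3⟩ | ⟨h1, h2, h3⟩)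
    · exact Or.inl ⟨h1, h2⟩
    · exact Or.inr (Or.inl ⟨h2, h3⟩)
    · exact Or.inr (Or.inr (Or.inl ⟨h3, h1⟩))
    · exact Or.inr (Or.inr (Or.inr ⟨h1, h2, h3⟩))
  · rintro (⟨h1, h2⟩ | ⟨h1, h2⟩ | ⟨h1, h2⟩ | ⟨h1, h2, h3⟩)
    · exact Or.inl ⟨h1, h2, Nat.zero_le _⟩
    · exact Or.inr (Or.inl ⟨Nat.zero_le _, h1, h2⟩)
    · exact Or.inr (Or.inr (Or.inl ⟨h2, Nat.zero_le _, h1⟩))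
    · exact Or.inr (Or.inr (Or.inr ⟨h1, h2, h3⟩))

lemma hQR3 (t : ℕ) : ∀ d : Fin (2+1) →₀ ℕ, d.degree = t →
    ((¬ ∃ e ∈ ({f1, f2, f3} : Finset _), e ≤ d) ↔ ¬ P3 (d 0, d 1, d 2)) := by
  intro d _
  apply not_congr
  simp only [Finset.mem_insert, Finset.mem_singleton, exists_eq_or_imp, exists_eq_left,
    le_iff_coords, P3]
  rw [f1v.1, f1v.2.1, f1v.2.2, f2v.1, f2v.2.1, f2v.2.2, f3v.1, f3v.2.1, f3v.2.2]
  constructor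
  · rintro (⟨h1, h2, h3⟩ | ⟨h1, h2, h3⟩ | ⟨h1, h2, h3⟩)
    · exact Or.inl ⟨h1, h2⟩
    · exact Or.inr (Or.inl ⟨h2, h3⟩)
    · exact Or.inr (Or.inr ⟨h3, h1⟩)
  · rintro (⟨h1, h2⟩ | ⟨h1, h2⟩ | ⟨h1, h2⟩)
    · exact Or.inl ⟨h1, h2, Nat.zero_le _⟩
    · exact Or.inr (Or.inl ⟨Nat.zero_le _, h1, h2⟩)
    · exact Or.inr (Or.inr ⟨h2, Nat.zero_le _, h1⟩)

end Main

/-- In `S = k[x, y, z]` the monomial ideal `I = (x³y², y³z², z³x², x²y²z²)` has the generic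
Hilbert function of 18 points, `h_{S/I}(t) = min (C(t+2, 2)) 18`, and its chopped ideal
`J = (x³y², y³z², z³x²)` in degree `5` satisfies `h_{S/J}(6) = 19` and `h_{S/J}(7) = 18`. -/
theorem monomial_ideal_18_points (k : Type) [Field k] :
    (∀ t : ℕ, hilbFn k (Ideal.span {(X 0 : MvPolynomial (Fin (2 + 1)) k) ^ 3 * X 1 ^ 2,
        X 1 ^ 3 * X 2 ^ 2, X 2 ^ 3 * X 0 ^ 2, X 0 ^ 2 * X 1 ^ 2 * X 2 ^ 2}) t =
        min (Nat.choose (t + 2) 2) 18) ∧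
    hilbFn k (Ideal.span {(X 0 : MvPolynomial (Fin (2 + 1)) k) ^ 3 * X 1 ^ 2,
        X 1 ^ 3 * X 2 ^ 2, X 2 ^ 3 * X 0 ^ 2}) 6 = 19 ∧
    hilbFn k (Ideal.span {(X 0 : MvPolynomial (Fin (2 + 1)) k) ^ 3 * X 1 ^ 2,
        X 1 ^ 3 * X 2 ^ 2, X 2 ^ 3 * X 0 ^ 2}) 7 = 18 := by
  classical
  have hno4 : ∀ t : ℕ, hilbFn k (Ideal.span ((fun d => (monomial d (1:k) : MvPolynomial (Fin (2+1)) k)) '' ↑({f1, f2, f3, f4} : Finset _))) t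
      = ((finite_deg' t).toFinset.filter
          (fun d => ¬ ∃ e ∈ ({f1, f2, f3, f4} : Finset (Fin (2+1) →₀ ℕ)), e ≤ d)).card :=
    fun t => hilb_monomial _ t
  refine ⟨?_, ?_, ?_⟩
  · intro t
    rw [himg4, hno4 t]
    rcases le_or_gt t 4 with ht | ht
    · have hfull : ((finite_deg' t).toFinset.filter
          (fun d => ¬ ∃ e ∈ ({f1, f2, f3, f4} : Finset (Fin (2+1) →₀ ℕ)), e ≤ d))
          = (finite_deg' t).toFinset := by
        refine Finset.filter_true_of_mem ?_
        intro d hd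
        rw [Set.Finite.mem_toFinset, Set.mem_setOf_eq] at hd
        rintro ⟨e, he, hle⟩
        rw [le_iff_coords] at hle
        obtain ⟨a1, a2, a3⟩ := hle
        have hds := degree_eq_sum3 d
        simp only [Finset.mem_insert, Finset.mem_singleton] at he
        rcases he with rfl | rfl | rfl | rfl
        · rw [f1v.1] at a1; rw [f1v.2.1] at a2; omega
        · rw [f2v.2.1] at a2; rw [f2v.2.2] at a3; omega
        · rw [f3v.1] at a1; rw [f3v.2.2] at a3; omega
        · rw [f4v.1] at a1; rw [f4v.2.1] at a2; rw [f4v.2.2] at a3; omega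
      rw [hfull, card_deg']
      have hle18 : (t + 2).choose 2 ≤ 18 := by
        interval_cases t <;> norm_num [Nat.choose]
      exact (min_eq_left hle18).symm
    · rw [count_triples t _ (fun p => ¬ P4 p) (hQR4 t), count18 t (by omega)]
      have h18 : 18 ≤ (t + 2).choose 2 := by
        have h21 : (7 : ℕ).choose 2 ≤ (t + 2).choose 2 := Nat.choose_le_choose 2 (by omega)
        norm_num [Nat.choose] at h21 ⊢
        omega
      exact (min_eq_right h18).symm
  · rw [himg3, hilb_monomial, count_triples 6 _ (fun p => ¬ P3 p) (hQR3 6), count_chop6]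
  · rw [himg3, hilb_monomial, count_triples 7 _ (fun p => ¬ P3 p) (hQR3 7), count_chop7]
end

section
/- For all integers n ≥ 2 and d ≥ 1, the expected-syzygy alternating sum at e = (n-1)d - (n+1) equals the expected codimension: Σ_{k≥1} (-1)^{k+1} · binom(n + d + e - kd, n) · binom(n+1, k) = binom(n + d + e, n) - (binom(n+d, n) - (n+1)), where e = (n-1)d - (n+1) and binom(a,n) = 0 for a < n. -/
/-- `ichoose a n` is the binomial coefficient `C(a, n)` for an integer `a`, with the convention
that `C(a, n) = 0` for `a < 0` (and hence for all `a < n`). -/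
def ichoose (a : ℤ) (n : ℕ) : ℤ := if a < 0 then 0 else (a.toNat.choose n : ℤ)

lemma ichoose_eq_zero_of_lt {a : ℤ} {n : ℕ} (h : a < n) : ichoose a n = 0 := by
  unfold ichoose
  split
  · rfl
  · rename_i h0
    push_neg at h0
    rw [Nat.choose_eq_zero_of_lt (by omega), Nat.cast_zero]

lemma factorial_mul_ichoose {a : ℤ} (n : ℕ) (h : 0 ≤ a) :
    (n.factorial : ℤ) * ichoose a n = (descPochhammer ℤ n).eval a := by
  rw [ichoose, if_neg (not_lt.mpr h)]
  conv_rhs => rw [show a = (a.toNat : ℤ) from (Int.toNat_of_nonneg h).symm]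
  rw [descPochhammer_eval_eq_descFactorial ℤ a.toNat n,
    Nat.descFactorial_eq_factorial_mul_choose]
  push_cast
  ring

lemma descPochhammer_reflect (n : ℕ) (a : ℤ) :
    (descPochhammer ℤ n).eval a = (-1) ^ n * (descPochhammer ℤ n).eval ((n : ℤ) - 1 - a) := by
  rw [descPochhammer_eval_eq_ascPochhammer,
    show a - n + 1 = -((n : ℤ) - 1 - a) by ring,
    ascPochhammer_eval_neg_eq_descPochhammer]

/-- reflection identity for `ichoose` up to the Pochhammer polynomial. -/
lemma key_reflect (n : ℕ) (a : ℤ) :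
    (n.factorial : ℤ) * ichoose a n =
      (descPochhammer ℤ n).eval a
        - (-1) ^ n * ((n.factorial : ℤ) * ichoose ((n : ℤ) - 1 - a) n) := by
  rcases lt_or_ge a 0 with h | h
  · rw [show ichoose a n = 0 from if_pos h, mul_zero,
      descPochhammer_reflect n a,
      factorial_mul_ichoose n (by omega : (0 : ℤ) ≤ (n : ℤ) - 1 - a)]
    ring
  · rw [factorial_mul_ichoose n h,
      ichoose_eq_zero_of_lt (show (n : ℤ) - 1 - a < n by omega), mul_zero, mul_zero, sub_zero]

lemma fwdDiff_iter_zero_fun (N : ℕ) :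
    (fwdDiff (1 : ℤ))^[N] (fun _ => (0 : ℤ)) = fun _ => 0 := by
  induction N with
  | zero => rfl
  | succ N ih => rw [Function.iterate_succ_apply, show fwdDiff (1 : ℤ) (fun _ => (0 : ℤ)) = fun _ => 0 by funext x; simp [fwdDiff], ih]

lemma fwdDiff_iter_poly_eq_zero :
    ∀ (N : ℕ) (P : Polynomial ℤ), P.natDegree < N →
      ∀ y : ℤ, (fwdDiff (1 : ℤ))^[N] (fun x => P.eval x) y = 0 := by
  intro N
  induction N with
  | zero => intro P h; omega
  | succ N ih =>
    intro P hP y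
    rw [Function.iterate_succ_apply]
    have hΔ : fwdDiff (1 : ℤ) (fun x => P.eval x)
        = fun x => (P.comp (Polynomial.X + 1) - P).eval x := by
      funext x
      simp [fwdDiff, Polynomial.eval_comp]
    rw [hΔ]
    set Q := P.comp (Polynomial.X + 1) - P with hQdef
    by_cases hQ0 : Q = 0
    · rw [hQ0]
      simp only [Polynomial.eval_zero]
      rw [fwdDiff_iter_zero_fun]
    · apply ih
      by_cases hP0 : P.natDegree = 0
      · exfalso
        obtain ⟨c, hc⟩ := Polynomial.natDegree_eq_zero.mp hP0
        apply hQ0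
        rw [hQdef, ← hc, Polynomial.C_comp, sub_self]
      · have hX1 : (Polynomial.X + 1 : Polynomial ℤ).natDegree = 1 := by
          simpa using Polynomial.natDegree_X_add_C (1 : ℤ)
        have hcompdeg : (P.comp (Polynomial.X + 1)).natDegree = P.natDegree := by
          rw [Polynomial.natDegree_comp, hX1, mul_one]
        have hcomp0 : P.comp (Polynomial.X + 1) ≠ 0 := by
          intro h
          rw [h, Polynomial.natDegree_zero] at hcompdeg
          exact hP0 hcompdeg.symm
        have hlead : (P.comp (Polynomial.X + 1)).leadingCoeff = P.leadingCoeff := by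
          rw [Polynomial.leadingCoeff_comp (by rw [hX1]; exact one_ne_zero)]
          have : (Polynomial.X + 1 : Polynomial ℤ).leadingCoeff = 1 := by
            simpa using (Polynomial.monic_X_add_C (1 : ℤ)).leadingCoeff
          rw [this, one_pow, mul_one]
        have hdeg : (P.comp (Polynomial.X + 1)).degree = P.degree := by
          rw [Polynomial.degree_eq_natDegree hcomp0,
            Polynomial.degree_eq_natDegree (fun h => hP0 (by rw [h, Polynomial.natDegree_zero])),
            hcompdeg]
        have hlt : Q.degree < (P.comp (Polynomial.X + 1)).degree :=
          Polynomial.degree_sub_lt hdeg hcomp0 hlead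
        have : Q.natDegree < (P.comp (Polynomial.X + 1)).natDegree :=
          Polynomial.natDegree_lt_natDegree hQ0 hlt
        omega

/-- alternating binomial sums of a polynomial of degree `< N` vanish. -/
lemma alt_sum_poly (N : ℕ) (P : Polynomial ℤ) (hP : P.natDegree < N) :
    ∑ j ∈ Finset.range (N + 1), (-1 : ℤ) ^ j * (Nat.choose N j : ℤ) * P.eval (j : ℤ) = 0 := by
  have h := fwdDiff_iter_eq_sum_shift (h := (1 : ℤ)) (fun x : ℤ => P.eval x) N 0
  rw [fwdDiff_iter_poly_eq_zero N P hP 0] at h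
  have h2 : (-1 : ℤ) ^ N * ∑ k ∈ Finset.range (N + 1),
      ((-1 : ℤ) ^ (N - k) * (Nat.choose N k : ℤ)) • P.eval ((0 : ℤ) + k • (1 : ℤ)) = 0 := by
    rw [← h]; ring
  rw [Finset.mul_sum] at h2
  rw [← h2]
  apply Finset.sum_congr rfl
  intro k hk
  rw [Finset.mem_range] at hk
  have hkN : k ≤ N := by omega
  have hsign : (-1 : ℤ) ^ N = (-1 : ℤ) ^ (N - k) * (-1 : ℤ) ^ k := by
    rw [← pow_add]
    congr 1
    omega
  rw [smul_eq_mul, hsign]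
  have : ((0 : ℤ) + k • (1 : ℤ)) = (k : ℤ) := by simp
  rw [this]
  have hsq : (-1 : ℤ) ^ (N - k) * (-1 : ℤ) ^ (N - k) = 1 := by
    rw [← pow_add, ← two_mul, pow_mul]
    norm_num
  linear_combination (-(-1 : ℤ) ^ k * (Nat.choose N k : ℤ) * P.eval (k : ℤ)) * hsq

lemma neg_one_pow_sub (a b : ℕ) (h : b ≤ a) :
    (-1 : ℤ) ^ (a - b) = (-1 : ℤ) ^ a * (-1 : ℤ) ^ b := by
  have h1 : ((-1 : ℤ) ^ b) * ((-1 : ℤ) ^ b) = 1 := by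
    rw [← pow_add, ← two_mul, pow_mul]
    norm_num
  calc (-1 : ℤ) ^ (a - b) = (-1 : ℤ) ^ (a - b) * (((-1 : ℤ) ^ b) * ((-1 : ℤ) ^ b)) := by
        rw [h1, mul_one]
    _ = ((-1 : ℤ) ^ (a - b) * (-1 : ℤ) ^ b) * (-1 : ℤ) ^ b := by ring
    _ = (-1 : ℤ) ^ a * (-1 : ℤ) ^ b := by rw [← pow_add, Nat.sub_add_cancel h]

lemma main_T (n d : ℕ) (hn : 2 ≤ n) (hd : 1 ≤ d) :
    ∑ j ∈ Finset.range (n + 2),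
        (-1 : ℤ) ^ j * (Nat.choose (n + 1) j : ℤ) * ichoose ((n : ℤ) * d - 1 - j * d) n =
      (Nat.choose (n + d) n : ℤ) - ((n : ℤ) + 1) := by
  set c : ℤ := (n : ℤ) * d - 1 with hc
  -- the linear polynomial  c - d • X
  set L : Polynomial ℤ := Polynomial.C (-(d : ℤ)) * Polynomial.X + Polynomial.C c with hL
  set P : Polynomial ℤ := (descPochhammer ℤ n).comp L with hPdef
  have hPdeg : P.natDegree = n := by
    rw [hPdef, Polynomial.natDegree_comp, descPochhammer_natDegree,
      Polynomial.natDegree_linear (show (-(d:ℤ)) ≠ 0 by simp; omega)]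
    ring
  have hA : ∑ j ∈ Finset.range (n + 2),
      (-1 : ℤ) ^ j * (Nat.choose (n + 1) j : ℤ) * (descPochhammer ℤ n).eval (c - j * d) = 0 := by
    have := alt_sum_poly (n + 1) P (by omega)
    rw [← this]
    apply Finset.sum_congr rfl
    intro j _
    congr 1
    rw [hPdef, Polynomial.eval_comp, hL]
    congr 1
    simp
    ring
  -- the reflected sum
  have hU : ∑ j ∈ Finset.range (n + 2),
      (-1 : ℤ) ^ j * (Nat.choose (n + 1) j : ℤ) * ichoose ((n : ℤ) - 1 - (c - j * d)) n =
      (-1 : ℤ) ^ (n + 1) * ∑ j ∈ Finset.range (n + 2),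
        (-1 : ℤ) ^ j * (Nat.choose (n + 1) j : ℤ) * ichoose ((n : ℤ) + d - j * d) n := by
    rw [Finset.mul_sum,
      ← Finset.sum_range_reflect
        (fun j => (-1 : ℤ) ^ j * (Nat.choose (n + 1) j : ℤ) * ichoose ((n : ℤ) - 1 - (c - j * d)) n)
        (n + 2)]
    apply Finset.sum_congr rfl
    intro j hj
    rw [Finset.mem_range] at hj
    have hj' : j ≤ n + 1 := by omega
    have h1 : n + 2 - 1 - j = n + 1 - j := by omega
    rw [h1, neg_one_pow_sub (n + 1) j hj', Nat.choose_symm hj']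
    have h2 : ((n + 1 - j : ℕ) : ℤ) = (n : ℤ) + 1 - j := by
      omega
    rw [h2]
    have h3 : (n : ℤ) - 1 - (c - ((n : ℤ) + 1 - j) * d) = (n : ℤ) + d - j * d := by
      rw [hc]; ring
    rw [h3]
    ring
  -- value of the reflected sum
  have hV : ∑ j ∈ Finset.range (n + 2),
      (-1 : ℤ) ^ j * (Nat.choose (n + 1) j : ℤ) * ichoose ((n : ℤ) + d - j * d) n =
      (Nat.choose (n + d) n : ℤ) - ((n : ℤ) + 1) := by
    rw [Finset.sum_range_succ' _ (n + 1), Finset.sum_range_succ' _ n]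
    have hzero : ∀ i ∈ Finset.range n,
        (-1 : ℤ) ^ (i + 1 + 1) * (Nat.choose (n + 1) (i + 1 + 1) : ℤ)
          * ichoose ((n : ℤ) + d - (↑(i + 1 + 1)) * d) n = 0 := by
      intro i _
      rw [ichoose_eq_zero_of_lt (by push_cast; nlinarith), mul_zero]
    rw [Finset.sum_eq_zero hzero]
    have hf0 : ichoose ((n : ℤ) + d - (↑(0:ℕ)) * d) n = (Nat.choose (n + d) n : ℤ) := by
      rw [ichoose, if_neg (by push_cast; omega)]
      congr 2
      omega
    have hf1 : ichoose ((n : ℤ) + d - (↑(0+1:ℕ)) * d) n = 1 := by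
      rw [ichoose, if_neg (by push_cast; omega)]
      have : ((n : ℤ) + d - (↑(0+1:ℕ)) * d).toNat = n := by push_cast; omega
      rw [this, Nat.choose_self, Nat.cast_one]
    rw [hf0, hf1]
    simp [Nat.choose_one_right]
    ring
  -- put things together, multiplying by n!
  have hfac : ((n.factorial : ℤ)) ≠ 0 := by exact_mod_cast n.factorial_ne_zero
  apply mul_left_cancel₀ hfac
  rw [Finset.mul_sum]
  calc ∑ j ∈ Finset.range (n + 2),
        (n.factorial : ℤ) * ((-1 : ℤ) ^ j * (Nat.choose (n + 1) j : ℤ)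
          * ichoose (c - j * d) n)
      = ∑ j ∈ Finset.range (n + 2),
          ((-1 : ℤ) ^ j * (Nat.choose (n + 1) j : ℤ) * (descPochhammer ℤ n).eval (c - j * d)
            - (-1 : ℤ) ^ n * ((-1 : ℤ) ^ j * (Nat.choose (n + 1) j : ℤ)
              * ((n.factorial : ℤ) * ichoose ((n : ℤ) - 1 - (c - j * d)) n))) := by
        apply Finset.sum_congr rfl
        intro j _
        rw [show (n.factorial : ℤ) * ((-1 : ℤ) ^ j * (Nat.choose (n + 1) j : ℤ)
            * ichoose (c - j * d) n)
          = (-1 : ℤ) ^ j * (Nat.choose (n + 1) j : ℤ)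
            * ((n.factorial : ℤ) * ichoose (c - j * d) n) by ring]
        rw [key_reflect n (c - j * d)]
        ring
    _ = (∑ j ∈ Finset.range (n + 2),
          (-1 : ℤ) ^ j * (Nat.choose (n + 1) j : ℤ) * (descPochhammer ℤ n).eval (c - j * d))
        - (-1 : ℤ) ^ n * ((n.factorial : ℤ) * ∑ j ∈ Finset.range (n + 2),
          (-1 : ℤ) ^ j * (Nat.choose (n + 1) j : ℤ) * ichoose ((n : ℤ) - 1 - (c - j * d)) n) := by
        rw [Finset.sum_sub_distrib]
        congr 1
        rw [Finset.mul_sum, Finset.mul_sum]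
        apply Finset.sum_congr rfl
        intro j _
        ring
    _ = (n.factorial : ℤ) * ((Nat.choose (n + d) n : ℤ) - ((n : ℤ) + 1)) := by
        rw [hA, hU, hV, zero_sub]
        have : (-1 : ℤ) ^ n * (-1 : ℤ) ^ (n + 1) = -1 := by
          rw [← pow_add]
          have : n + (n + 1) = 2 * n + 1 := by omega
          rw [this, pow_succ, pow_mul]
          norm_num
        calc -((-1 : ℤ) ^ n * ((n.factorial : ℤ)
              * ((-1 : ℤ) ^ (n + 1) * ((Nat.choose (n + d) n : ℤ) - ((n : ℤ) + 1)))))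
            = -(((-1 : ℤ) ^ n * (-1 : ℤ) ^ (n + 1)) * ((n.factorial : ℤ)
              * ((Nat.choose (n + d) n : ℤ) - ((n : ℤ) + 1)))) := by ring
          _ = (n.factorial : ℤ) * ((Nat.choose (n + d) n : ℤ) - ((n : ℤ) + 1)) := by
              rw [this]; ring

/-- For all `n ≥ 2` and `d ≥ 1`, with `e = (n-1)d - (n+1)`, the expected-syzygy alternating sum
equals the expected codimension:
`Σ_{k≥1} (-1)^{k+1} C(n+d+e-kd, n) C(n+1, k) = C(n+d+e, n) - (C(n+d, n) - (n+1))`. -/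
theorem expected_syzygy_sum_at_gap (n d : ℕ) (hn : 2 ≤ n) (hd : 1 ≤ d) :
    ∑ j ∈ Finset.Icc 1 (n + 1),
        (-1 : ℤ) ^ (j + 1) * ichoose ((n : ℤ) + d + (((n : ℤ) - 1) * d - ((n : ℤ) + 1)) - j * d) n
          * (Nat.choose (n + 1) j : ℤ) =
      ichoose ((n : ℤ) + d + (((n : ℤ) - 1) * d - ((n : ℤ) + 1))) n
        - ((Nat.choose (n + d) n : ℤ) - ((n : ℤ) + 1)) := by
  have hT := main_T n d hn hd
  rw [Finset.sum_range_succ' _ (n + 1)] at hT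
  -- identify the degree:  n + d + ((n-1)d - (n+1)) = n*d - 1
  have hE : (n : ℤ) + d + (((n : ℤ) - 1) * d - ((n : ℤ) + 1)) = (n : ℤ) * d - 1 := by ring
  rw [hE]
  have hIcc : Finset.Icc 1 (n + 1) = Finset.Ico 1 (n + 2) := by
    exact (Finset.Ico_add_one_right_eq_Icc (a := 1) (b := n + 1)).symm
  rw [hIcc, Finset.sum_Ico_eq_sum_range]
  have hrange : n + 2 - 1 = n + 1 := by omega
  rw [hrange]
  have hterm : ∀ i ∈ Finset.range (n + 1),
      (-1 : ℤ) ^ (1 + i + 1) * ichoose ((n : ℤ) * d - 1 - (↑(1 + i)) * d) n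
        * (Nat.choose (n + 1) (1 + i) : ℤ)
      = -((-1 : ℤ) ^ (i + 1) * (Nat.choose (n + 1) (i + 1) : ℤ)
          * ichoose ((n : ℤ) * d - 1 - (↑(i + 1)) * d) n) := by
    intro i _
    rw [show 1 + i = i + 1 by omega, pow_succ]
    ring
  rw [Finset.sum_congr rfl hterm, Finset.sum_neg_distrib]
  have h0 : (-1 : ℤ) ^ 0 * (Nat.choose (n + 1) 0 : ℤ)
      * ichoose ((n : ℤ) * d - 1 - (↑(0:ℕ)) * d) n = ichoose ((n : ℤ) * d - 1) n := by
    simp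
  rw [h0] at hT
  linarith [hT]
end
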